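/- arXiv:1212.4717 — 3 statements merged into one kernel-verified Lean document; each statement's English description precedes it below -/
import Mathlib

section
/- The chain (Φₖ)_{k ≥ 0} is a submartingale with respect to the filtration (Fₖ)_{k ≥ 0}: each Φₖ is integrable, Fₖ-measurable, and E[Φₖ | Fₖ₋₁] ≥ Φₖ₋₁ almost surely for every k ≥ 1. -/
open MeasureTheory Real

/-- Standard Gaussian density on ℝ. -/
noncomputable def gaussDensity (z : ℝ) : ℝ := Real.exp (-z ^ 2 / 2) / Real.sqrt (2 * Real.pi)

/-- One-step update of the conditional odds process upon observing a normalized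
increment `z` after a waiting time `t`, starting from odds `φ`. -/
noncomputable def jfun (lam alp t φ z : ℝ) : ℝ :=
  Real.exp (alp * z * Real.sqrt t + (lam - alp ^ 2 / 2) * t) * φ +
    ∫ u in (0:ℝ)..t, lam * Real.exp ((lam + alp * z / Real.sqrt t) * u - alp ^ 2 * u ^ 2 / (2 * t))


/-- The discretely observed odds chain: `Φ₀ = φ` and `Φₖ = j(t, Φₖ₋₁, Zₖ)`. -/
noncomputable def oddsChain {Ω : Type*} (lam alp t φ : ℝ) (Z : ℕ → Ω → ℝ) : ℕ → Ω → ℝ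
  | 0 => fun _ => φ
  | k + 1 => fun ω => jfun lam alp t (oddsChain lam alp t φ Z k ω) (Z (k + 1) ω)

/-- The filtration `Fₖ = σ(Z₁, …, Zₖ)` generated by the first `k` observations
(`F₀` is trivial). -/
def obsFiltration {Ω : Type*} (Z : ℕ → Ω → ℝ) (k : ℕ) : MeasurableSpace Ω :=
  ⨆ i ∈ Set.Icc 1 k, MeasurableSpace.comap (Z i) inferInstance

section Aux

open ProbabilityTheory

lemma pdf_mul_aux (s x : ℝ) :
    gaussianPDFReal 0 1 x * Real.exp (s * x) = Real.exp (s^2/2) * gaussianPDFReal s 1 x := by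
  simp only [gaussianPDFReal, NNReal.coe_one, mul_one, sub_zero]
  have h : Real.exp (-x^2 / 2) * Real.exp (s * x)
      = Real.exp (s^2/2) * Real.exp (-(x - s)^2 / 2) := by
    rw [← Real.exp_add, ← Real.exp_add]
    congr 1
    ring
  linear_combination (Real.sqrt (2 * Real.pi))⁻¹ * h

lemma gaussianReal_eq_aux : gaussianReal 0 1
    = MeasureTheory.volume.withDensity (fun x => ((gaussianPDFReal 0 1 x).toNNReal : ENNReal)) := by
  rw [gaussianReal_of_var_ne_zero 0 one_ne_zero]
  rfl

lemma smul_pdf_eq_aux (s : ℝ) : (fun x => (gaussianPDFReal 0 1 x).toNNReal • Real.exp (s * x))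
    = fun x => Real.exp (s^2/2) * gaussianPDFReal s 1 x := by
  funext x
  rw [NNReal.smul_def, Real.coe_toNNReal _ (gaussianPDFReal_nonneg 0 1 x), smul_eq_mul,
    pdf_mul_aux]

lemma gauss_exp_integrable (s : ℝ) :
    Integrable (fun x => Real.exp (s * x)) (gaussianReal 0 1) := by
  rw [gaussianReal_eq_aux,
    integrable_withDensity_iff_integrable_smul (measurable_gaussianPDFReal 0 1).real_toNNReal,
    smul_pdf_eq_aux]
  exact (integrable_gaussianPDFReal s 1).const_mul _

lemma gauss_exp_integral (s : ℝ) :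
    ∫ x, Real.exp (s * x) ∂(gaussianReal 0 1) = Real.exp (s^2/2) := by
  rw [gaussianReal_eq_aux,
    integral_withDensity_eq_integral_smul (measurable_gaussianPDFReal 0 1).real_toNNReal,
    show (fun x => (gaussianPDFReal 0 1 x).toNNReal • Real.exp (s * x))
      = fun x => Real.exp (s^2/2) * gaussianPDFReal s 1 x from smul_pdf_eq_aux s,
    integral_const_mul, integral_gaussianPDFReal_eq_one s one_ne_zero, mul_one]

lemma exp_comp_integrable {Ω : Type*} [MeasurableSpace Ω] (μ : Measure Ω) (X : Ω → ℝ)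
    (hX : Measurable X) (hdist : μ.map X = gaussianReal 0 1) (s : ℝ) :
    Integrable (fun ω => Real.exp (s * X ω)) μ := by
  have h := gauss_exp_integrable s
  rw [← hdist] at h
  exact (integrable_map_measure ((measurable_id.const_mul s).exp).aestronglyMeasurable
    hX.aemeasurable).mp h

lemma exp_comp_integral {Ω : Type*} [MeasurableSpace Ω] (μ : Measure Ω) (X : Ω → ℝ)
    (hX : Measurable X) (hdist : μ.map X = gaussianReal 0 1) (s : ℝ) :
    ∫ ω, Real.exp (s * X ω) ∂μ = Real.exp (s^2/2) := by
  have h : ∫ ω, Real.exp (s * X ω) ∂μ = ∫ x, Real.exp (s * x) ∂(μ.map X) :=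
    (integral_map hX.aemeasurable ((measurable_id.const_mul s).exp).aestronglyMeasurable).symm
  rw [h, hdist, gauss_exp_integral]

/-- The additive part of the one-step update. -/
noncomputable def Cfun (lam alp t z : ℝ) : ℝ :=
  ∫ u in (0:ℝ)..t, lam * Real.exp ((lam + alp * z / Real.sqrt t) * u - alp ^ 2 * u ^ 2 / (2 * t))

lemma Cfun_cont_integrand (lam alp t z : ℝ) :
    Continuous fun u : ℝ =>
      lam * Real.exp ((lam + alp * z / Real.sqrt t) * u - alp ^ 2 * u ^ 2 / (2 * t)) := by
  fun_prop

lemma Cfun_nonneg (lam alp t z : ℝ) (hlam : 0 < lam) (ht : 0 < t) : 0 ≤ Cfun lam alp t z := by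
  apply intervalIntegral.integral_nonneg ht.le
  intro u _
  positivity

lemma Cfun_measurable (lam alp t : ℝ) (ht : 0 < t) : Measurable (Cfun lam alp t) := by
  have h : ∀ z, Cfun lam alp t z = ∫ u in Set.Ioc (0:ℝ) t,
      lam * Real.exp ((lam + alp * z / Real.sqrt t) * u - alp ^ 2 * u ^ 2 / (2 * t)) := fun z =>
    intervalIntegral.integral_of_le ht.le
  rw [show Cfun lam alp t = fun z => ∫ u in Set.Ioc (0:ℝ) t,
      lam * Real.exp ((lam + alp * z / Real.sqrt t) * u - alp ^ 2 * u ^ 2 / (2 * t)) from funext h]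
  apply (StronglyMeasurable.integral_prod_right ?_).measurable
  apply Continuous.stronglyMeasurable
  fun_prop

lemma Cfun_le (lam alp t z : ℝ) (hlam : 0 < lam) (halp : 0 < alp) (ht : 0 < t) :
    Cfun lam alp t z ≤ t * (lam * Real.exp (lam * t) *
      (Real.exp (alp * Real.sqrt t * z) + Real.exp (-(alp * Real.sqrt t * z)))) := by
  have hst : (0:ℝ) < Real.sqrt t := Real.sqrt_pos.mpr ht
  have key : ∀ u ∈ Set.Icc (0:ℝ) t,
      lam * Real.exp ((lam + alp * z / Real.sqrt t) * u - alp ^ 2 * u ^ 2 / (2 * t))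
        ≤ lam * Real.exp (lam * t) *
          (Real.exp (alp * Real.sqrt t * z) + Real.exp (-(alp * Real.sqrt t * z))) := by
    intro u hu
    obtain ⟨hu0, hut⟩ := hu
    have h1 : (lam + alp * z / Real.sqrt t) * u - alp ^ 2 * u ^ 2 / (2 * t)
        ≤ lam * t + |alp * Real.sqrt t * z| := by
      have e1 : lam * u ≤ lam * t := by nlinarith
      have e2 : alp * z / Real.sqrt t * u ≤ |alp * Real.sqrt t * z| := by
        calc alp * z / Real.sqrt t * u ≤ |alp * z / Real.sqrt t * u| := le_abs_self _
          _ = alp * |z| / Real.sqrt t * u := by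
              rw [abs_mul, abs_div, abs_mul, abs_of_pos halp, abs_of_pos hst, abs_of_nonneg hu0]
          _ ≤ alp * |z| / Real.sqrt t * t := by
              apply mul_le_mul_of_nonneg_left hut
              positivity
          _ = alp * Real.sqrt t * |z| := by
              rw [div_mul_eq_mul_div, div_eq_iff hst.ne']
              have htt : Real.sqrt t * Real.sqrt t = t := Real.mul_self_sqrt ht.le
              rw [show alp * |z| * t = alp * |z| * (Real.sqrt t * Real.sqrt t) by rw [htt]]
              ring
          _ = |alp * Real.sqrt t * z| := by
              rw [abs_mul (alp * Real.sqrt t) z,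
                abs_of_pos (by positivity : 0 < alp * Real.sqrt t)]
      have e3 : 0 ≤ alp ^ 2 * u ^ 2 / (2 * t) := by positivity
      nlinarith
    calc lam * Real.exp ((lam + alp * z / Real.sqrt t) * u - alp ^ 2 * u ^ 2 / (2 * t))
        ≤ lam * Real.exp (lam * t + |alp * Real.sqrt t * z|) :=
          mul_le_mul_of_nonneg_left (Real.exp_le_exp.mpr h1) hlam.le
      _ = lam * Real.exp (lam * t) * Real.exp |alp * Real.sqrt t * z| := by
          rw [Real.exp_add]; ring
      _ ≤ lam * Real.exp (lam * t) *
          (Real.exp (alp * Real.sqrt t * z) + Real.exp (-(alp * Real.sqrt t * z))) := by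
          apply mul_le_mul_of_nonneg_left _ (by positivity)
          rcases abs_cases (alp * Real.sqrt t * z) with ⟨h, _⟩ | ⟨h, _⟩ <;> rw [h] <;>
            nlinarith [Real.exp_pos (alp * Real.sqrt t * z),
              Real.exp_pos (-(alp * Real.sqrt t * z))]
  calc Cfun lam alp t z ≤ ∫ _u in (0:ℝ)..t, lam * Real.exp (lam * t) *
          (Real.exp (alp * Real.sqrt t * z) + Real.exp (-(alp * Real.sqrt t * z))) := by
        apply intervalIntegral.integral_mono_on ht.le
          ((Cfun_cont_integrand lam alp t z).intervalIntegrable 0 t)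
          intervalIntegrable_const key
    _ = t * (lam * Real.exp (lam * t) *
          (Real.exp (alp * Real.sqrt t * z) + Real.exp (-(alp * Real.sqrt t * z)))) := by
        rw [intervalIntegral.integral_const, smul_eq_mul, sub_zero]

end Aux

open ProbabilityTheory in
/-- The odds chain `(Φₖ)` is a submartingale with respect to `(Fₖ)`: each `Φₖ` is
integrable and `Fₖ`-measurable, and `E[Φₖ | Fₖ₋₁] ≥ Φₖ₋₁` almost surely for `k ≥ 1`. -/
theorem oddsChain_submartingale (lam alp t : ℝ) (hlam : 0 < lam) (halp : 0 < alp) (ht : 0 < t)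
    {Ω : Type*} [MeasurableSpace Ω] (μ : MeasureTheory.Measure Ω) [IsProbabilityMeasure μ]
    (Z : ℕ → Ω → ℝ) (hZmeas : ∀ k, Measurable (Z k))
    (hZdist : ∀ k, 1 ≤ k → μ.map (Z k) = ProbabilityTheory.gaussianReal 0 1)
    (hZindep : ProbabilityTheory.iIndepFun Z μ)
    (φ : ℝ) (hφ : 0 ≤ φ) :
    (∀ k : ℕ, Integrable (oddsChain lam alp t φ Z k) μ) ∧
    (∀ k : ℕ, Measurable[obsFiltration Z k] (oddsChain lam alp t φ Z k)) ∧
    (∀ k : ℕ, 1 ≤ k →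
        oddsChain lam alp t φ Z (k - 1) ≤ᵐ[μ]
          μ[oddsChain lam alp t φ Z k | obsFiltration Z (k - 1)]) := by
  have hst : (0:ℝ) < Real.sqrt t := Real.sqrt_pos.mpr ht
  have hs2 : (alp * Real.sqrt t)^2 = alp^2 * t := by
    rw [mul_pow, Real.sq_sqrt ht.le]
  -- pointwise description of one step
  have hchain : ∀ k (ω : Ω), oddsChain lam alp t φ Z (k+1) ω
      = oddsChain lam alp t φ Z k ω
          * Real.exp (alp * Z (k+1) ω * Real.sqrt t + (lam - alp ^ 2 / 2) * t)
        + Cfun lam alp t (Z (k+1) ω) := by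
    intro k ω
    show jfun lam alp t (oddsChain lam alp t φ Z k ω) (Z (k+1) ω) = _
    rw [jfun, Cfun, mul_comm]
  -- the multiplicative factor, as a function of x : ℝ
  set gW : ℝ → ℝ := fun x => Real.exp (alp * x * Real.sqrt t + (lam - alp ^ 2 / 2) * t)
    with hgW_def
  have hgW_meas : Measurable gW := by fun_prop
  have hgW_eq : ∀ x, gW x
      = Real.exp ((alp * Real.sqrt t) * x) * Real.exp ((lam - alp ^ 2 / 2) * t) := by
    intro x
    show Real.exp (alp * x * Real.sqrt t + (lam - alp ^ 2 / 2) * t) = _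
    rw [← Real.exp_add]
    congr 1
    ring
  -- integrability and integral of W k
  have hW_int : ∀ k, 1 ≤ k → Integrable (fun ω => gW (Z k ω)) μ := by
    intro k hk
    have h := (exp_comp_integrable μ (Z k) (hZmeas k) (hZdist k hk)
      (alp * Real.sqrt t)).mul_const (Real.exp ((lam - alp ^ 2 / 2) * t))
    exact h.congr (ae_of_all _ fun ω => (hgW_eq (Z k ω)).symm)
  have hW_integral : ∀ k, 1 ≤ k →
      ∫ ω, gW (Z k ω) ∂μ = Real.exp (lam * t) := by
    intro k hk
    have h1 : ∫ ω, gW (Z k ω) ∂μ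
        = ∫ ω, Real.exp ((alp * Real.sqrt t) * Z k ω) * Real.exp ((lam - alp ^ 2 / 2) * t) ∂μ := by
      apply integral_congr_ae (ae_of_all _ fun ω => hgW_eq (Z k ω))
    rw [h1, integral_mul_const, exp_comp_integral μ (Z k) (hZmeas k) (hZdist k hk),
      ← Real.exp_add, hs2]
    congr 1
    ring
  -- integrability of the additive part
  have hC_int : ∀ k, 1 ≤ k → Integrable (fun ω => Cfun lam alp t (Z k ω)) μ := by
    intro k hk
    have h1 := exp_comp_integrable μ (Z k) (hZmeas k) (hZdist k hk) (alp * Real.sqrt t)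
    have h2 := exp_comp_integrable μ (Z k) (hZmeas k) (hZdist k hk) (-(alp * Real.sqrt t))
    have h2' : Integrable (fun ω => Real.exp (-(alp * Real.sqrt t * Z k ω))) μ := by
      apply h2.congr (ae_of_all _ fun ω => ?_)
      simp [neg_mul]
    have hD : Integrable (fun ω => t * (lam * Real.exp (lam * t) *
        (Real.exp (alp * Real.sqrt t * Z k ω)
          + Real.exp (-(alp * Real.sqrt t * Z k ω))))) μ :=
      ((h1.add h2').const_mul (lam * Real.exp (lam * t))).const_mul t
    apply hD.mono' (((Cfun_measurable lam alp t ht).comp (hZmeas k)).aestronglyMeasurable :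
      AEStronglyMeasurable (fun ω => Cfun lam alp t (Z k ω)) μ)
    apply ae_of_all _ fun ω => ?_
    simp only [Function.comp_apply]
    rw [Real.norm_eq_abs, abs_of_nonneg (Cfun_nonneg lam alp t _ hlam ht)]
    exact Cfun_le lam alp t (Z k ω) hlam halp ht
  -- filtration facts
  have hle : ∀ k, obsFiltration Z k ≤ ‹MeasurableSpace Ω› := fun k =>
    iSup₂_le fun i _ => (hZmeas i).comap_le
  have hZF : ∀ k, Measurable[obsFiltration Z (k+1)] (Z (k+1)) := by
    intro k
    apply Measurable.of_comap_le
    exact le_biSup (fun i => MeasurableSpace.comap (Z i) inferInstance)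
      (Set.mem_Icc.mpr ⟨Nat.le_add_left 1 k, le_rfl⟩)
  -- measurability w.r.t. the filtration
  have hmeasF : ∀ k, Measurable[obsFiltration Z k] (oddsChain lam alp t φ Z k) := by
    intro k
    induction k with
    | zero => exact measurable_const
    | succ k ih =>
      have hprev : Measurable[obsFiltration Z (k+1)] (oddsChain lam alp t φ Z k) :=
        ih.mono (biSup_mono fun i hi => Set.mem_Icc.mpr
          ⟨(Set.mem_Icc.mp hi).1, le_trans (Set.mem_Icc.mp hi).2 (Nat.le_succ k)⟩) le_rfl
      rw [show oddsChain lam alp t φ Z (k+1) = fun ω =>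
          oddsChain lam alp t φ Z k ω * gW (Z (k+1) ω) + Cfun lam alp t (Z (k+1) ω) from
        funext fun ω => hchain k ω]
      exact (hprev.mul (hgW_meas.comp (hZF k))).add
        ((Cfun_measurable lam alp t ht).comp (hZF k))
  -- nonnegativity of the chain
  have hΦnonneg : ∀ k (ω : Ω), 0 ≤ oddsChain lam alp t φ Z k ω := by
    intro k
    induction k with
    | zero => intro ω; exact hφ
    | succ k ih =>
      intro ω
      rw [hchain k ω]
      have h1 := Cfun_nonneg lam alp t (Z (k+1) ω) hlam ht
      have h2 := (Real.exp_pos (alp * Z (k+1) ω * Real.sqrt t + (lam - alp ^ 2 / 2) * t)).le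
      have := ih ω
      exact add_nonneg (mul_nonneg this h2) h1
  -- independence
  have hindep : ∀ j, Indep (MeasurableSpace.comap (Z (j+1)) inferInstance)
      (obsFiltration Z j) μ := by
    intro j
    have hdisj : Disjoint ({j+1} : Set ℕ) (Set.Icc 1 j) := by
      rw [Set.disjoint_singleton_left, Set.mem_Icc]
      omega
    have h := indep_iSup_of_disjoint (fun i => (hZmeas i).comap_le) hZindep.iIndep hdisj
    have h2 : (⨆ i ∈ ({j+1} : Set ℕ), MeasurableSpace.comap (Z i) inferInstance)
        = MeasurableSpace.comap (Z (j+1)) inferInstance := by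
      simp
    rw [obsFiltration, ← h2]
    exact h
  -- independence of the chain value and the next factor
  have hWcomap : ∀ j, Measurable[MeasurableSpace.comap (Z (j+1)) inferInstance]
      (fun ω => gW (Z (j+1) ω)) := by
    intro j
    exact hgW_meas.comp (Measurable.of_comap_le le_rfl)
  have hindepF : ∀ j, IndepFun (oddsChain lam alp t φ Z j) (fun ω => gW (Z (j+1) ω)) μ := by
    intro j
    exact indep_of_indep_of_le_right (indep_of_indep_of_le_left (hindep j).symm
      (hmeasF j).comap_le) (hWcomap j).comap_le
  -- integrability of the chain
  have hint : ∀ k, Integrable (oddsChain lam alp t φ Z k) μ := by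
    intro k
    induction k with
    | zero => exact integrable_const φ
    | succ k ih =>
      rw [show oddsChain lam alp t φ Z (k+1) = (oddsChain lam alp t φ Z k
          * fun ω => gW (Z (k+1) ω)) + fun ω => Cfun lam alp t (Z (k+1) ω) from
        funext fun ω => hchain k ω]
      exact ((hindepF k).integrable_mul ih (hW_int (k+1) (Nat.le_add_left 1 k))).add
        (hC_int (k+1) (Nat.le_add_left 1 k))
  refine ⟨hint, hmeasF, ?_⟩
  -- the submartingale property
  intro k hk
  obtain ⟨j, rfl⟩ : ∃ j, k = j + 1 := ⟨k - 1, (Nat.succ_pred_eq_of_pos hk).symm⟩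
  simp only [Nat.add_sub_cancel]
  have hlej : obsFiltration Z j ≤ ‹MeasurableSpace Ω› := hle j
  haveI : SigmaFinite (μ.trim hlej) := by infer_instance
  have hXW_int : Integrable (oddsChain lam alp t φ Z j * fun ω => gW (Z (j+1) ω)) μ :=
    (hindepF j).integrable_mul (hint j) (hW_int (j+1) (Nat.le_add_left 1 j))
  have hCz_int : Integrable (fun ω => Cfun lam alp t (Z (j+1) ω)) μ :=
    hC_int (j+1) (Nat.le_add_left 1 j)
  have heq : oddsChain lam alp t φ Z (j+1)
      = oddsChain lam alp t φ Z j * (fun ω => gW (Z (j+1) ω))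
        + (fun ω => Cfun lam alp t (Z (j+1) ω)) := funext fun ω => hchain j ω
  rw [heq]
  have e1 := condExp_add (m := obsFiltration Z j) (μ := μ) hXW_int hCz_int
  have e2 := condExp_mul_of_stronglyMeasurable_left (μ := μ) (hmeasF j).stronglyMeasurable
    hXW_int (hW_int (j+1) (Nat.le_add_left 1 j))
  have e3 := condExp_indep_eq (μ := μ) (f := fun ω => gW (Z (j+1) ω))
    (hZmeas (j+1)).comap_le hlej
    (Measurable.stronglyMeasurable (hWcomap j)) (hindep j)
  have e4 : ∫ ω, gW (Z (j+1) ω) ∂μ = Real.exp (lam * t) :=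
    hW_integral (j+1) (Nat.le_add_left 1 j)
  have e5 : (0 : Ω → ℝ) ≤ᵐ[μ]
      μ[(fun ω => Cfun lam alp t (Z (j+1) ω)) | obsFiltration Z j] :=
    condExp_nonneg (ae_of_all _ fun ω => Cfun_nonneg lam alp t _ hlam ht)
  filter_upwards [e1, e2, e3, e5] with ω h1 h2 h3 h5
  simp only [Pi.zero_apply] at h5
  have hbase : oddsChain lam alp t φ Z j ω
      ≤ oddsChain lam alp t φ Z j ω * Real.exp (lam * t) :=
    le_mul_of_one_le_right (hΦnonneg j ω) (Real.one_le_exp (by positivity))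
  rw [h1, Pi.add_apply, h2, Pi.mul_apply, h3, e4]
  linarith
end

section
/- For every k ≥ 1, Φₖ is square-integrable and, almost surely, E[Φₖ² | Fₖ₋₁] ≤ Φₖ₋₁² e^{(2λ + α²)t} + 2Φₖ₋₁ e^{λt}(λ/(λ + α²))(e^{(λ + α²)t} − 1) + e^{α² t}(e^{λt} − 1)². -/
open MeasureTheory Real ProbabilityTheory
open scoped ENNReal NNReal

set_option linter.unusedSectionVars false
set_option linter.unusedVariables false


noncomputable def gammaM : Measure ℝ := gaussianReal 0 1

instance : IsProbabilityMeasure gammaM :=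
  inferInstanceAs (IsProbabilityMeasure (gaussianReal 0 1))

lemma exp_mul_exp_mul (L a b : ℝ) : rexp a * (L * rexp b) = L * rexp (a + b) := by
  rw [Real.exp_add]; ring

lemma mul_exp_mul_exp (L a b : ℝ) : L * rexp a * rexp b = L * rexp (a + b) := by
  rw [Real.exp_add]; ring

lemma gaussianPDFReal01 (x : ℝ) :
    gaussianPDFReal 0 1 x = (Real.sqrt (2 * π))⁻¹ * rexp (-x ^ 2 / 2) := by
  simp [gaussianPDFReal]

lemma gammaM_eq : gammaM = volume.withDensity (fun x => ((gaussianPDFReal 0 1 x).toNNReal : ℝ≥0∞)) := by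
  rw [gammaM, gaussianReal_of_var_ne_zero _ one_ne_zero]
  rfl

lemma integral_gammaM (f : ℝ → ℝ) :
    ∫ x, f x ∂gammaM = ∫ x, gaussianPDFReal 0 1 x * f x := by
  rw [gammaM_eq, integral_withDensity_eq_integral_smul
    (measurable_gaussianPDFReal 0 1).real_toNNReal f]
  congr 1 with x
  simp [NNReal.smul_def, Real.coe_toNNReal _ (gaussianPDFReal_nonneg 0 1 x)]

lemma integrable_gammaM_iff (f : ℝ → ℝ) :
    Integrable f gammaM ↔ Integrable (fun x => gaussianPDFReal 0 1 x * f x) volume := by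
  rw [gammaM_eq, integrable_withDensity_iff_integrable_smul
    (measurable_gaussianPDFReal 0 1).real_toNNReal]
  constructor <;> intro h <;> refine h.congr (Filter.Eventually.of_forall fun x => ?_) <;>
    simp [NNReal.smul_def, Real.coe_toNNReal _ (gaussianPDFReal_nonneg 0 1 x)]

lemma gauss_complete_sq (c x : ℝ) :
    gaussianPDFReal 0 1 x * rexp (c * x)
      = (Real.sqrt (2 * π))⁻¹ * rexp (c ^ 2 / 2) * rexp (-(2⁻¹) * (x - c) ^ 2) := by
  rw [gaussianPDFReal01, mul_assoc, mul_assoc, ← Real.exp_add, ← Real.exp_add]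
  ring_nf

lemma integrable_exp_mul_gammaM (c : ℝ) : Integrable (fun x => rexp (c * x)) gammaM := by
  rw [integrable_gammaM_iff]
  simp_rw [gauss_complete_sq c]
  exact ((integrable_exp_neg_mul_sq (by norm_num : (0:ℝ) < 2⁻¹)).comp_sub_right c).const_mul _

lemma integral_exp_mul_gammaM (c : ℝ) :
    ∫ x, rexp (c * x) ∂gammaM = rexp (c ^ 2 / 2) := by
  rw [integral_gammaM]
  simp_rw [gauss_complete_sq c]
  rw [MeasureTheory.integral_const_mul,
    integral_sub_right_eq_self (fun y => rexp (-(2⁻¹) * y ^ 2)) c,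
    integral_gaussian]
  have h1 : Real.sqrt (π / 2⁻¹) = Real.sqrt (2 * π) := by
    norm_num [div_eq_mul_inv, mul_comm]
  have h2 : Real.sqrt (2 * π) ≠ 0 := by positivity
  rw [h1]
  field_simp

noncomputable def Af (lam alp t z : ℝ) : ℝ :=
  rexp (alp * z * Real.sqrt t + (lam - alp ^ 2 / 2) * t)

noncomputable def ff (lam alp t z u : ℝ) : ℝ :=
  lam * rexp ((lam + alp * z / Real.sqrt t) * u - alp ^ 2 * u ^ 2 / (2 * t))

noncomputable def Bf (lam alp t z : ℝ) : ℝ := ∫ u in Set.Ioc (0:ℝ) t, ff lam alp t z u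

variable {lam alp t : ℝ}

lemma jfun_eq (ht : 0 ≤ t) (φ z : ℝ) :
    jfun lam alp t φ z = Af lam alp t z * φ + Bf lam alp t z := by
  rw [jfun, intervalIntegral.integral_of_le ht]; rfl

lemma measurable_Af : Measurable (Af lam alp t) := by
  unfold Af; fun_prop

lemma measurable_ff2 : Measurable (fun p : ℝ × ℝ => ff lam alp t p.1 p.2) := by
  unfold ff; fun_prop

lemma measurable_Bf : Measurable (Bf lam alp t) := by
  have : StronglyMeasurable (fun z => ∫ u, (fun p : ℝ × ℝ => ff lam alp t p.1 p.2) (z, u)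
      ∂(volume.restrict (Set.Ioc (0:ℝ) t))) :=
    measurable_ff2.stronglyMeasurable.integral_prod_right'
  exact this.measurable

lemma Af_nonneg (z : ℝ) : 0 ≤ Af lam alp t z := (Real.exp_pos _).le

lemma ff_nonneg (hlam : 0 ≤ lam) (z u : ℝ) : 0 ≤ ff lam alp t z u :=
  mul_nonneg hlam (Real.exp_pos _).le

lemma Bf_nonneg (hlam : 0 ≤ lam) (z : ℝ) : 0 ≤ Bf lam alp t z :=
  integral_nonneg (fun u => ff_nonneg hlam z u)

lemma Af_le (halp : 0 ≤ alp) (z : ℝ) :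
    Af lam alp t z ≤ rexp ((lam - alp ^ 2 / 2) * t) * rexp (alp * Real.sqrt t * |z|) := by
  rw [Af, ← Real.exp_add]
  refine Real.exp_le_exp.2 ?_
  have h : alp * z * Real.sqrt t ≤ alp * Real.sqrt t * |z| := by
    have := mul_le_mul_of_nonneg_right
      (mul_le_mul_of_nonneg_left (le_abs_self z) halp) (Real.sqrt_nonneg t)
    nlinarith [this]
  linarith

lemma ff_le (hlam : 0 ≤ lam) (halp : 0 ≤ alp) (ht : 0 < t) (z u : ℝ)
    (hu : u ∈ Set.Ioc (0:ℝ) t) :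
    ff lam alp t z u ≤ lam * rexp (lam * t) * rexp (alp * Real.sqrt t * |z|) := by
  have hu0 : 0 < u := hu.1
  have hut : u ≤ t := hu.2
  have hst : 0 < Real.sqrt t := Real.sqrt_pos.2 ht
  have hexp : rexp ((lam + alp * z / Real.sqrt t) * u - alp ^ 2 * u ^ 2 / (2 * t))
      ≤ rexp (lam * t) * rexp (alp * Real.sqrt t * |z|) := by
    rw [← Real.exp_add]
    refine Real.exp_le_exp.2 ?_
    have e1 : (lam + alp * z / Real.sqrt t) * u
        = lam * u + alp * z * u / Real.sqrt t := by ring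
    have e2 : alp * z * u / Real.sqrt t ≤ alp * |z| * u / Real.sqrt t := by
      gcongr
      exact le_abs_self z
    have e3 : alp * |z| * u / Real.sqrt t ≤ alp * Real.sqrt t * |z| := by
      rw [div_le_iff₀ hst]
      have heq : alp * Real.sqrt t * |z| * Real.sqrt t = alp * |z| * t := by
        rw [show alp * Real.sqrt t * |z| * Real.sqrt t
            = alp * |z| * (Real.sqrt t * Real.sqrt t) from by ring,
          Real.mul_self_sqrt ht.le]
      rw [heq]
      exact mul_le_mul_of_nonneg_left hut (mul_nonneg halp (abs_nonneg z))
    have e4 : lam * u ≤ lam * t := by gcongr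
    have e5 : 0 ≤ alp ^ 2 * u ^ 2 / (2 * t) := by positivity
    linarith
  calc ff lam alp t z u
      ≤ lam * (rexp (lam * t) * rexp (alp * Real.sqrt t * |z|)) :=
        mul_le_mul_of_nonneg_left hexp hlam
    _ = lam * rexp (lam * t) * rexp (alp * Real.sqrt t * |z|) := (mul_assoc _ _ _).symm

lemma integral_exp_mul_Ioc {c : ℝ} (hc : c ≠ 0) (ht : 0 ≤ t) :
    ∫ u in Set.Ioc (0:ℝ) t, rexp (c * u) = (rexp (c * t) - 1) / c := by
  rw [← intervalIntegral.integral_of_le ht]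
  have := intervalIntegral.integral_comp_mul_left (a := (0:ℝ)) (b := t)
    (fun x => rexp x) hc
  simp only [mul_zero, integral_exp, smul_eq_mul] at this
  rw [this, Real.exp_zero]
  field_simp

lemma Af_sq_eq (z : ℝ) : (Af lam alp t z) ^ 2
    = rexp ((2 * lam - alp ^ 2) * t) * rexp ((2 * alp * Real.sqrt t) * z) := by
  rw [Af, sq, ← Real.exp_add, ← Real.exp_add]
  congr 1
  ring

lemma integrable_Af_sq : Integrable (fun z => (Af lam alp t z) ^ 2) gammaM := by
  simp_rw [Af_sq_eq]
  exact (integrable_exp_mul_gammaM _).const_mul _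

lemma intE1 (ht : 0 ≤ t) :
    ∫ z, (Af lam alp t z) ^ 2 ∂gammaM = rexp ((2 * lam + alp ^ 2) * t) := by
  simp_rw [Af_sq_eq]
  rw [MeasureTheory.integral_const_mul, integral_exp_mul_gammaM, ← Real.exp_add]
  congr 1
  have h : (2 * alp * Real.sqrt t) ^ 2 = 4 * alp ^ 2 * t := by
    rw [mul_pow, mul_pow, Real.sq_sqrt ht]
    ring
  rw [h]
  ring

lemma exp_abs_le (c z : ℝ) : rexp (c * |z|) ≤ rexp (c * z) + rexp (-c * z) := by
  rcases abs_cases z with ⟨h, _⟩ | ⟨h, _⟩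
  · rw [h]
    nlinarith [Real.exp_pos (-c * z)]
  · rw [h, show c * -z = -c * z from by ring]
    nlinarith [Real.exp_pos (c * z)]

lemma integrable_bound_prod {β : Type*} [MeasurableSpace β] (νx : Measure β)
    [IsFiniteMeasure νx] (c C : ℝ) :
    Integrable (fun p : ℝ × β => C * (rexp (c * p.1) + rexp (-c * p.1)))
      (gammaM.prod νx) := by
  have h := (((integrable_exp_mul_gammaM c).add (integrable_exp_mul_gammaM (-c))).const_mul
    C).mul_prod (integrable_const (1:ℝ) (μ := νx))
  simpa using h

lemma integrable_joint1 (hlam : 0 ≤ lam) (halp : 0 ≤ alp) (ht : 0 < t) :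
    Integrable (fun p : ℝ × ℝ => Af lam alp t p.1 * ff lam alp t p.1 p.2)
      (gammaM.prod (volume.restrict (Set.Ioc (0:ℝ) t))) := by
  set c := 2 * alp * Real.sqrt t with hc
  set C := rexp ((lam - alp ^ 2 / 2) * t) * (lam * rexp (lam * t)) with hC
  refine Integrable.mono' (integrable_bound_prod _ c C) ?_ ?_
  · exact ((measurable_Af.comp measurable_fst).mul measurable_ff2).aestronglyMeasurable
  · have hmeq : gammaM.prod (volume.restrict (Set.Ioc (0:ℝ) t))
        = (gammaM.prod volume).restrict (Set.univ ×ˢ Set.Ioc (0:ℝ) t) := by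
      rw [← Measure.prod_restrict, Measure.restrict_univ]
    rw [hmeq]
    filter_upwards [ae_restrict_mem (MeasurableSet.univ.prod measurableSet_Ioc)] with p hp
    have hp2 : p.2 ∈ Set.Ioc (0:ℝ) t := hp.2
    have h1 := Af_le (lam := lam) (t := t) halp p.1
    have h2 := ff_le hlam halp ht p.1 p.2 hp2
    have hnn : 0 ≤ Af lam alp t p.1 * ff lam alp t p.1 p.2 :=
      mul_nonneg (Af_nonneg _) (ff_nonneg hlam _ _)
    rw [Real.norm_of_nonneg hnn]
    calc Af lam alp t p.1 * ff lam alp t p.1 p.2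
        ≤ (rexp ((lam - alp ^ 2 / 2) * t) * rexp (alp * Real.sqrt t * |p.1|)) *
          (lam * rexp (lam * t) * rexp (alp * Real.sqrt t * |p.1|)) := by
          exact mul_le_mul h1 h2 (ff_nonneg hlam _ _) (by positivity)
      _ = C * (rexp (alp * Real.sqrt t * |p.1|) * rexp (alp * Real.sqrt t * |p.1|)) := by
          rw [hC]; ring
      _ = C * rexp (c * |p.1|) := by
          rw [← Real.exp_add, hc]
          congr 2
          ring
      _ ≤ C * (rexp (c * p.1) + rexp (-c * p.1)) := by
          have hC0 : 0 ≤ C := by rw [hC]; positivity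
          exact mul_le_mul_of_nonneg_left (exp_abs_le c p.1) hC0

lemma inner_Af_ff (hlam : 0 ≤ lam) (ht : 0 < t) (u : ℝ) :
    ∫ z, Af lam alp t z * ff lam alp t z u ∂gammaM
      = lam * rexp (lam * t) * rexp ((lam + alp ^ 2) * u) := by
  have hs0 : Real.sqrt t ≠ 0 := by positivity
  have hts : t = Real.sqrt t * Real.sqrt t := (Real.mul_self_sqrt ht.le).symm
  have hpt : ∀ z, Af lam alp t z * ff lam alp t z u
      = lam * rexp ((lam - alp ^ 2 / 2) * t + lam * u - alp ^ 2 * u ^ 2 / (2 * t)) *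
        rexp ((alp * Real.sqrt t + alp * u / Real.sqrt t) * z) := by
    intro z
    rw [Af, ff, exp_mul_exp_mul, mul_exp_mul_exp]
    congr 2
    field_simp
    ring
  simp_rw [hpt]
  rw [MeasureTheory.integral_const_mul, integral_exp_mul_gammaM, mul_exp_mul_exp,
    mul_exp_mul_exp]
  congr 2
  have key : ∀ s : ℝ, s ≠ 0 →
      ((lam - alp ^ 2 / 2) * (s * s) + lam * u - alp ^ 2 * u ^ 2 / (2 * (s * s))) +
        ((alp * s + alp * u / s) ^ 2 / 2) = lam * (s * s) + (lam + alp ^ 2) * u := by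
    intro s hs
    field_simp
    ring
  have h := key (Real.sqrt t) hs0
  rw [Real.mul_self_sqrt ht.le] at h
  exact h

lemma Af_mul_Bf_eq (z : ℝ) : Af lam alp t z * Bf lam alp t z
    = ∫ u in Set.Ioc (0:ℝ) t, Af lam alp t z * ff lam alp t z u :=
  (MeasureTheory.integral_const_mul _ _).symm

lemma integrable_Af_mul_Bf (hlam : 0 ≤ lam) (halp : 0 ≤ alp) (ht : 0 < t) :
    Integrable (fun z => Af lam alp t z * Bf lam alp t z) gammaM := by
  have h := (integrable_joint1 hlam halp ht).integral_prod_left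
  exact h.congr (Filter.Eventually.of_forall fun z => (Af_mul_Bf_eq z).symm)

lemma intE2 (hlam : 0 < lam) (halp : 0 < alp) (ht : 0 < t) :
    ∫ z, Af lam alp t z * Bf lam alp t z ∂gammaM
      = rexp (lam * t) * (lam / (lam + alp ^ 2)) * (rexp ((lam + alp ^ 2) * t) - 1) := by
  have hla : lam + alp ^ 2 ≠ 0 := by positivity
  calc ∫ z, Af lam alp t z * Bf lam alp t z ∂gammaM
      = ∫ z, (∫ u in Set.Ioc (0:ℝ) t, Af lam alp t z * ff lam alp t z u) ∂gammaM :=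
        integral_congr_ae (Filter.Eventually.of_forall fun z => Af_mul_Bf_eq z)
    _ = ∫ u in Set.Ioc (0:ℝ) t, (∫ z, Af lam alp t z * ff lam alp t z u ∂gammaM) :=
        integral_integral_swap (integrable_joint1 hlam.le halp.le ht)
    _ = ∫ u in Set.Ioc (0:ℝ) t, lam * rexp (lam * t) * rexp ((lam + alp ^ 2) * u) :=
        integral_congr_ae (Filter.Eventually.of_forall fun u => inner_Af_ff hlam.le ht u)
    _ = lam * rexp (lam * t) * ((rexp ((lam + alp ^ 2) * t) - 1) / (lam + alp ^ 2)) := by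
        rw [MeasureTheory.integral_const_mul, integral_exp_mul_Ioc hla ht.le]
    _ = rexp (lam * t) * (lam / (lam + alp ^ 2)) * (rexp ((lam + alp ^ 2) * t) - 1) := by
        rw [div_eq_mul_inv, div_eq_mul_inv]
        ring

lemma lam_exp_mul_lam_exp (L a b : ℝ) : L * rexp a * (L * rexp b) = L ^ 2 * rexp (a + b) := by
  rw [Real.exp_add]; ring

lemma integrable_joint2 (hlam : 0 ≤ lam) (halp : 0 ≤ alp) (ht : 0 < t) :
    Integrable (fun q : ℝ × (ℝ × ℝ) => ff lam alp t q.1 q.2.1 * ff lam alp t q.1 q.2.2)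
      (gammaM.prod ((volume.restrict (Set.Ioc (0:ℝ) t)).prod
        (volume.restrict (Set.Ioc (0:ℝ) t)))) := by
  set c := 2 * alp * Real.sqrt t with hc
  set C := lam * rexp (lam * t) * (lam * rexp (lam * t)) with hC
  refine Integrable.mono' (integrable_bound_prod _ c C) ?_ ?_
  · exact ((measurable_ff2.comp (measurable_fst.prodMk
      (measurable_fst.comp measurable_snd))).mul
      (measurable_ff2.comp (measurable_fst.prodMk
      (measurable_snd.comp measurable_snd)))).aestronglyMeasurable
  · have hmeq : gammaM.prod ((volume.restrict (Set.Ioc (0:ℝ) t)).prod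
        (volume.restrict (Set.Ioc (0:ℝ) t)))
        = (gammaM.prod (volume.prod volume)).restrict
          (Set.univ ×ˢ (Set.Ioc (0:ℝ) t ×ˢ Set.Ioc (0:ℝ) t)) := by
      rw [Measure.prod_restrict]
      conv_rhs => rw [← Measure.prod_restrict]
      rw [Measure.restrict_univ]
    rw [hmeq]
    filter_upwards [ae_restrict_mem (MeasurableSet.univ.prod
      (measurableSet_Ioc.prod measurableSet_Ioc))] with q hq
    have h1 := ff_le hlam halp ht q.1 q.2.1 hq.2.1
    have h2 := ff_le hlam halp ht q.1 q.2.2 hq.2.2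
    have hnn : 0 ≤ ff lam alp t q.1 q.2.1 * ff lam alp t q.1 q.2.2 :=
      mul_nonneg (ff_nonneg hlam _ _) (ff_nonneg hlam _ _)
    rw [Real.norm_of_nonneg hnn]
    calc ff lam alp t q.1 q.2.1 * ff lam alp t q.1 q.2.2
        ≤ (lam * rexp (lam * t) * rexp (alp * Real.sqrt t * |q.1|)) *
          (lam * rexp (lam * t) * rexp (alp * Real.sqrt t * |q.1|)) :=
          mul_le_mul h1 h2 (ff_nonneg hlam _ _) (by positivity)
      _ = C * (rexp (alp * Real.sqrt t * |q.1|) * rexp (alp * Real.sqrt t * |q.1|)) := by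
          rw [hC]; ring
      _ = C * rexp (c * |q.1|) := by
          rw [← Real.exp_add, hc]
          congr 2
          ring
      _ ≤ C * (rexp (c * q.1) + rexp (-c * q.1)) := by
          have hC0 : 0 ≤ C := by rw [hC]; positivity
          exact mul_le_mul_of_nonneg_left (exp_abs_le c q.1) hC0

lemma inner_ff_ff (ht : 0 < t) (u v : ℝ) :
    ∫ z, ff lam alp t z u * ff lam alp t z v ∂gammaM
      = lam ^ 2 * rexp (lam * (u + v) + alp ^ 2 * (u * v) / t) := by
  have hs0 : Real.sqrt t ≠ 0 := by positivity
  have hpt : ∀ z, ff lam alp t z u * ff lam alp t z v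
      = lam ^ 2 * rexp (lam * (u + v) - alp ^ 2 * (u ^ 2 + v ^ 2) / (2 * t)) *
        rexp ((alp * (u + v) / Real.sqrt t) * z) := by
    intro z
    rw [ff, ff, lam_exp_mul_lam_exp, mul_exp_mul_exp]
    congr 2
    field_simp
    ring
  simp_rw [hpt]
  rw [MeasureTheory.integral_const_mul, integral_exp_mul_gammaM, mul_exp_mul_exp]
  congr 2
  have key : ∀ s : ℝ, s ≠ 0 →
      (lam * (u + v) - alp ^ 2 * (u ^ 2 + v ^ 2) / (2 * (s * s))) +
        ((alp * (u + v) / s) ^ 2 / 2)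
      = lam * (u + v) + alp ^ 2 * (u * v) / (s * s) := by
    intro s hs
    field_simp
    ring
  have h := key (Real.sqrt t) hs0
  rw [Real.mul_self_sqrt ht.le] at h
  exact h

lemma Bf_sq_eq (z : ℝ) : (Bf lam alp t z) ^ 2
    = ∫ p, ff lam alp t z p.1 * ff lam alp t z p.2
        ∂((volume.restrict (Set.Ioc (0:ℝ) t)).prod (volume.restrict (Set.Ioc (0:ℝ) t))) := by
  rw [sq, Bf, ← MeasureTheory.integral_prod_mul]

lemma integrable_Bf_sq (hlam : 0 ≤ lam) (halp : 0 ≤ alp) (ht : 0 < t) :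
    Integrable (fun z => (Bf lam alp t z) ^ 2) gammaM := by
  have h := (integrable_joint2 hlam halp ht).integral_prod_left
  exact h.congr (Filter.Eventually.of_forall fun z => (Bf_sq_eq z).symm)

lemma integrable_exp_Ioc (hlam : 0 ≤ lam) :
    Integrable (fun u : ℝ => rexp (lam * u)) (volume.restrict (Set.Ioc (0:ℝ) t)) := by
  refine Integrable.mono' (integrable_const (rexp (lam * t))) ((Real.measurable_exp.comp (measurable_id.const_mul lam)).aestronglyMeasurable) ?_
  filter_upwards [ae_restrict_mem measurableSet_Ioc] with u hu
  rw [Real.norm_of_nonneg (Real.exp_pos _).le]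
  exact Real.exp_le_exp.2 (mul_le_mul_of_nonneg_left hu.2 hlam)

lemma intE3 (hlam : 0 < lam) (halp : 0 < alp) (ht : 0 < t) :
    ∫ z, (Bf lam alp t z) ^ 2 ∂gammaM
      ≤ rexp (alp ^ 2 * t) * (rexp (lam * t) - 1) ^ 2 := by
  set ν := volume.restrict (Set.Ioc (0:ℝ) t) with hν
  have heq1 : ∫ z, (Bf lam alp t z) ^ 2 ∂gammaM
      = ∫ p, lam ^ 2 * rexp (lam * (p.1 + p.2) + alp ^ 2 * (p.1 * p.2) / t)
          ∂(ν.prod ν) := by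
    calc ∫ z, (Bf lam alp t z) ^ 2 ∂gammaM
        = ∫ z, (∫ p, ff lam alp t z p.1 * ff lam alp t z p.2 ∂(ν.prod ν)) ∂gammaM :=
          integral_congr_ae (Filter.Eventually.of_forall fun z => Bf_sq_eq z)
      _ = ∫ p, (∫ z, ff lam alp t z p.1 * ff lam alp t z p.2 ∂gammaM) ∂(ν.prod ν) :=
          integral_integral_swap (integrable_joint2 hlam.le halp.le ht)
      _ = ∫ p, lam ^ 2 * rexp (lam * (p.1 + p.2) + alp ^ 2 * (p.1 * p.2) / t) ∂(ν.prod ν) :=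
          integral_congr_ae (Filter.Eventually.of_forall fun p => inner_ff_ff ht p.1 p.2)
  rw [heq1]
  have hInt1 : Integrable
      (fun p : ℝ × ℝ => lam ^ 2 * rexp (lam * (p.1 + p.2) + alp ^ 2 * (p.1 * p.2) / t))
      (ν.prod ν) := by
    have h := (integrable_joint2 hlam.le halp.le ht).integral_prod_right
    exact h.congr (Filter.Eventually.of_forall fun p => inner_ff_ff ht p.1 p.2)
  have hInt2 : Integrable
      (fun p : ℝ × ℝ => lam ^ 2 * rexp (alp ^ 2 * t) * (rexp (lam * p.1) * rexp (lam * p.2)))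
      (ν.prod ν) :=
    (((integrable_exp_Ioc hlam.le).mul_prod (integrable_exp_Ioc hlam.le)).const_mul _)
  have hbound : ∀ᵐ p ∂(ν.prod ν),
      lam ^ 2 * rexp (lam * (p.1 + p.2) + alp ^ 2 * (p.1 * p.2) / t)
        ≤ lam ^ 2 * rexp (alp ^ 2 * t) * (rexp (lam * p.1) * rexp (lam * p.2)) := by
    have hmeq : ν.prod ν = (volume.prod volume).restrict
        (Set.Ioc (0:ℝ) t ×ˢ Set.Ioc (0:ℝ) t) := Measure.prod_restrict _ _
    rw [hmeq]
    filter_upwards [ae_restrict_mem (measurableSet_Ioc.prod measurableSet_Ioc)] with p hp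
    have hu := hp.1
    have hv := hp.2
    have hexp : lam * (p.1 + p.2) + alp ^ 2 * (p.1 * p.2) / t
        ≤ alp ^ 2 * t + (lam * p.1 + lam * p.2) := by
      have huv : p.1 * p.2 ≤ t * t :=
        mul_le_mul hu.2 hv.2 hv.1.le (lt_of_lt_of_le hu.1 hu.2).le
      have : alp ^ 2 * (p.1 * p.2) / t ≤ alp ^ 2 * t := by
        rw [div_le_iff₀ ht]
        nlinarith [sq_nonneg alp]
      nlinarith [this]
    calc lam ^ 2 * rexp (lam * (p.1 + p.2) + alp ^ 2 * (p.1 * p.2) / t)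
        ≤ lam ^ 2 * rexp (alp ^ 2 * t + (lam * p.1 + lam * p.2)) := by
          exact mul_le_mul_of_nonneg_left (Real.exp_le_exp.2 hexp) (by positivity)
      _ = lam ^ 2 * rexp (alp ^ 2 * t) * (rexp (lam * p.1) * rexp (lam * p.2)) := by
          rw [Real.exp_add, Real.exp_add]; ring
  calc ∫ p, lam ^ 2 * rexp (lam * (p.1 + p.2) + alp ^ 2 * (p.1 * p.2) / t) ∂(ν.prod ν)
      ≤ ∫ p, lam ^ 2 * rexp (alp ^ 2 * t) * (rexp (lam * p.1) * rexp (lam * p.2))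
          ∂(ν.prod ν) := integral_mono_ae hInt1 hInt2 hbound
    _ = lam ^ 2 * rexp (alp ^ 2 * t) *
          (((rexp (lam * t) - 1) / lam) * ((rexp (lam * t) - 1) / lam)) := by
        rw [MeasureTheory.integral_const_mul,
          show (∫ a : ℝ × ℝ, rexp (lam * a.1) * rexp (lam * a.2) ∂(ν.prod ν))
            = (∫ u, rexp (lam * u) ∂ν) * ∫ u, rexp (lam * u) ∂ν from
            MeasureTheory.integral_prod_mul (fun u => rexp (lam * u)) (fun u => rexp (lam * u)),
          integral_exp_mul_Ioc hlam.ne' ht.le]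
    _ = rexp (alp ^ 2 * t) * (rexp (lam * t) - 1) ^ 2 := by
        field_simp

lemma integrable_of_sq {α : Type*} [MeasurableSpace α] {μ : Measure α} [IsFiniteMeasure μ]
    {f : α → ℝ} (hm : AEStronglyMeasurable f μ)
    (h : Integrable (fun a => f a ^ 2) μ) : Integrable f μ := by
  refine ((integrable_const (1:ℝ)).add h).mono' hm (Filter.Eventually.of_forall fun a => ?_)
  rw [Real.norm_eq_abs]
  simp only [Pi.add_apply]
  nlinarith [abs_nonneg (f a), sq_abs (f a)]

section Prob

open ProbabilityTheory

variable {Ω : Type*} [MeasurableSpace Ω] {μ : Measure Ω} {Z : ℕ → Ω → ℝ}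

lemma obsFiltration_le' (hZmeas : ∀ k, Measurable (Z k)) (n : ℕ) :
    obsFiltration Z n ≤ ‹MeasurableSpace Ω› :=
  iSup₂_le fun i _ => (hZmeas i).comap_le

lemma measurable_obs_Z (n i : ℕ) (hi : i ∈ Set.Icc 1 n) :
    Measurable[obsFiltration Z n] (Z i) :=
  Measurable.of_comap_le (le_biSup (fun i => MeasurableSpace.comap (Z i) inferInstance) hi)

lemma measurable_chain_obs {lam alp t φ : ℝ} (ht : 0 ≤ t) (n : ℕ) :
    ∀ j, j ≤ n → Measurable[obsFiltration Z n] (oddsChain lam alp t φ Z j) := by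
  intro j
  induction j with
  | zero => exact fun _ => measurable_const
  | succ j ih =>
    intro hj
    have hZ : Measurable[obsFiltration Z n] (Z (j + 1)) :=
      measurable_obs_Z n (j + 1) ⟨Nat.succ_le_succ (Nat.zero_le j), hj⟩
    have heq : oddsChain lam alp t φ Z (j + 1)
        = fun ω => Af lam alp t (Z (j + 1) ω) * oddsChain lam alp t φ Z j ω
            + Bf lam alp t (Z (j + 1) ω) := by
      funext ω
      exact jfun_eq ht _ _
    rw [heq]
    exact ((measurable_Af.comp hZ).mul (ih (Nat.le_of_succ_le hj))).add
      (measurable_Bf.comp hZ)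

lemma measurable_chain {lam alp t φ : ℝ} (ht : 0 ≤ t) (hZmeas : ∀ k, Measurable (Z k))
    (j : ℕ) : Measurable (oddsChain lam alp t φ Z j) := by
  induction j with
  | zero => exact measurable_const
  | succ j ih =>
    have heq : oddsChain lam alp t φ Z (j + 1)
        = fun ω => Af lam alp t (Z (j + 1) ω) * oddsChain lam alp t φ Z j ω
            + Bf lam alp t (Z (j + 1) ω) := by
      funext ω
      exact jfun_eq ht _ _
    rw [heq]
    exact ((measurable_Af.comp (hZmeas _)).mul ih).add (measurable_Bf.comp (hZmeas _))

lemma chain_nonneg {lam alp t φ : ℝ} (hlam : 0 ≤ lam) (ht : 0 ≤ t) (hφ : 0 ≤ φ)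
    (j : ℕ) (ω : Ω) : 0 ≤ oddsChain lam alp t φ Z j ω := by
  induction j with
  | zero => exact hφ
  | succ j ih =>
    show 0 ≤ jfun lam alp t (oddsChain lam alp t φ Z j ω) (Z (j + 1) ω)
    rw [jfun_eq ht]
    exact add_nonneg (mul_nonneg (Af_nonneg _) ih) (Bf_nonneg hlam _)

lemma indep_obs (hZmeas : ∀ k, Measurable (Z k))
    (hZindep : iIndepFun Z μ) (n : ℕ) :
    Indep (MeasurableSpace.comap (Z (n + 1)) inferInstance) (obsFiltration Z n) μ := by
  have hdisj : Disjoint ({n + 1} : Set ℕ) (Set.Icc 1 n) := by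
    simp only [Set.disjoint_singleton_left, Set.mem_Icc, not_and]
    omega
  have h := indep_iSup_of_disjoint (fun i => (hZmeas i).comap_le) hZindep.iIndep hdisj
  rwa [iSup_singleton] at h

lemma condexp_fun_Z [IsProbabilityMeasure μ] (hZmeas : ∀ k, Measurable (Z k))
    (hZindep : iIndepFun Z μ)
    (n : ℕ) {g : ℝ → ℝ} (hg : Measurable g) :
    μ[fun ω => g (Z (n + 1) ω)|obsFiltration Z n]
      =ᵐ[μ] fun _ => ∫ ω, g (Z (n + 1) ω) ∂μ :=
  condExp_indep_eq (hZmeas (n + 1)).comap_le (obsFiltration_le' hZmeas n)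
    ((hg.comp (Measurable.of_comap_le le_rfl)).stronglyMeasurable)
    (indep_obs hZmeas hZindep n)

lemma integrable_comp_Z {k : ℕ} (hZmeas : ∀ k, Measurable (Z k))
    (hZdist : μ.map (Z k) = gaussianReal 0 1) {g : ℝ → ℝ} (hg : Measurable g)
    (hgi : Integrable g gammaM) : Integrable (fun ω => g (Z k ω)) μ := by
  rw [gammaM, ← hZdist] at hgi
  exact (integrable_map_measure hg.aestronglyMeasurable (hZmeas k).aemeasurable).1 hgi

lemma integral_comp_Z {k : ℕ} (hZmeas : ∀ k, Measurable (Z k))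
    (hZdist : μ.map (Z k) = gaussianReal 0 1) {g : ℝ → ℝ} (hg : Measurable g) :
    ∫ ω, g (Z k ω) ∂μ = ∫ x, g x ∂gammaM := by
  rw [gammaM, ← hZdist, integral_map (hZmeas k).aemeasurable hg.aestronglyMeasurable]

lemma indepfun_chain (hZmeas : ∀ k, Measurable (Z k))
    (hZindep : iIndepFun Z μ)
    {lam alp t φ : ℝ} (ht : 0 ≤ t) (n : ℕ) :
    IndepFun (oddsChain lam alp t φ Z n) (Z (n + 1)) μ := by
  rw [IndepFun_iff_Indep]
  exact indep_of_indep_of_le_left (indep_obs hZmeas hZindep n).symm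
    (measurable_chain_obs ht n n le_rfl).comap_le

lemma chain_sq_integrable {lam alp t φ : ℝ} (hlam : 0 < lam) (halp : 0 < alp) (ht : 0 < t)
    [IsProbabilityMeasure μ] (hZmeas : ∀ k, Measurable (Z k))
    (hZdist : ∀ k, 1 ≤ k → μ.map (Z k) = gaussianReal 0 1)
    (hZindep : iIndepFun Z μ) (φ0 : 0 ≤ φ) :
    ∀ n, Integrable (fun ω => (oddsChain lam alp t φ Z n ω) ^ 2) μ := by
  intro n
  induction n with
  | zero => simpa [oddsChain] using integrable_const (φ ^ 2) (μ := μ)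
  | succ n ih =>
    have hXmeas : Measurable (oddsChain lam alp t φ Z n) := measurable_chain ht.le hZmeas n
    have hXint : Integrable (oddsChain lam alp t φ Z n) μ :=
      integrable_of_sq hXmeas.aestronglyMeasurable ih
    have hdist := hZdist (n + 1) (Nat.succ_le_succ (Nat.zero_le n))
    have hg1 : Integrable (fun ω => (Af lam alp t (Z (n + 1) ω)) ^ 2) μ :=
      integrable_comp_Z hZmeas hdist (measurable_Af.pow_const 2) integrable_Af_sq
    have hg2 : Integrable
        (fun ω => Af lam alp t (Z (n + 1) ω) * Bf lam alp t (Z (n + 1) ω)) μ :=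
      integrable_comp_Z hZmeas hdist (measurable_Af.mul measurable_Bf)
        (integrable_Af_mul_Bf hlam.le halp.le ht)
    have hg3 : Integrable (fun ω => (Bf lam alp t (Z (n + 1) ω)) ^ 2) μ :=
      integrable_comp_Z hZmeas hdist (measurable_Bf.pow_const 2)
        (integrable_Bf_sq hlam.le halp.le ht)
    have hindZ : IndepFun (oddsChain lam alp t φ Z n) (Z (n + 1)) μ :=
      indepfun_chain hZmeas hZindep ht.le n
    have h1 : Integrable ((fun ω => (oddsChain lam alp t φ Z n ω) ^ 2) *
        (fun ω => (Af lam alp t (Z (n + 1) ω)) ^ 2)) μ :=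
      (hindZ.comp (measurable_id.pow_const 2) (measurable_Af.pow_const 2)).integrable_mul
        ih hg1
    have h2 : Integrable ((fun ω => 2 * oddsChain lam alp t φ Z n ω) *
        (fun ω => Af lam alp t (Z (n + 1) ω) * Bf lam alp t (Z (n + 1) ω))) μ :=
      (hindZ.comp (measurable_id.const_mul 2) (measurable_Af.mul measurable_Bf)).integrable_mul
        (hXint.const_mul 2) hg2
    have heq : (fun ω => (oddsChain lam alp t φ Z (n + 1) ω) ^ 2)
        = (fun ω => (oddsChain lam alp t φ Z n ω) ^ 2 * (Af lam alp t (Z (n + 1) ω)) ^ 2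
            + 2 * oddsChain lam alp t φ Z n ω *
                (Af lam alp t (Z (n + 1) ω) * Bf lam alp t (Z (n + 1) ω))
            + (Bf lam alp t (Z (n + 1) ω)) ^ 2) := by
      funext ω
      show (jfun lam alp t (oddsChain lam alp t φ Z n ω) (Z (n + 1) ω)) ^ 2 = _
      rw [jfun_eq ht.le]
      ring
    rw [heq]
    exact (h1.add h2).add hg3

end Prob
/-- Conditional second-moment bound for the odds chain: for `k ≥ 1`, `Φₖ` is
square-integrable and a.s.
`E[Φₖ² | Fₖ₋₁] ≤ Φₖ₋₁² e^{(2λ+α²)t} + 2Φₖ₋₁ e^{λt}(λ/(λ+α²))(e^{(λ+α²)t} − 1)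
  + e^{α²t}(e^{λt} − 1)²`. -/
theorem oddsChain_condexp_sq_le (lam alp t : ℝ) (hlam : 0 < lam) (halp : 0 < alp) (ht : 0 < t)
    {Ω : Type*} [MeasurableSpace Ω] (μ : MeasureTheory.Measure Ω) [IsProbabilityMeasure μ]
    (Z : ℕ → Ω → ℝ) (hZmeas : ∀ k, Measurable (Z k))
    (hZdist : ∀ k, 1 ≤ k → μ.map (Z k) = ProbabilityTheory.gaussianReal 0 1)
    (hZindep : ProbabilityTheory.iIndepFun Z μ)
    (φ : ℝ) (hφ : 0 ≤ φ) :
    ∀ k : ℕ, 1 ≤ k →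
      Integrable (fun ω => (oddsChain lam alp t φ Z k ω) ^ 2) μ ∧
        ∀ᵐ ω ∂μ,
          (μ[fun ω' => (oddsChain lam alp t φ Z k ω') ^ 2 | obsFiltration Z (k - 1)]) ω ≤
            (oddsChain lam alp t φ Z (k - 1) ω) ^ 2 * Real.exp ((2 * lam + alp ^ 2) * t) +
              2 * oddsChain lam alp t φ Z (k - 1) ω * Real.exp (lam * t) *
                (lam / (lam + alp ^ 2)) * (Real.exp ((lam + alp ^ 2) * t) - 1) +
              Real.exp (alp ^ 2 * t) * (Real.exp (lam * t) - 1) ^ 2 := by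
  intro k hk
  obtain ⟨n, rfl⟩ : ∃ n, k = n + 1 := ⟨k - 1, (Nat.succ_pred_eq_of_pos hk).symm⟩
  refine ⟨chain_sq_integrable hlam halp ht hZmeas hZdist hZindep hφ (n + 1), ?_⟩
  simp only [Nat.add_sub_cancel]
  have hXmobs : Measurable[obsFiltration Z n] (oddsChain lam alp t φ Z n) :=
    measurable_chain_obs ht.le n n le_rfl
  have hXmeas : Measurable (oddsChain lam alp t φ Z n) := measurable_chain ht.le hZmeas n
  have ih := chain_sq_integrable hlam halp ht hZmeas hZdist hZindep hφ n
  have hXint : Integrable (oddsChain lam alp t φ Z n) μ :=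
    integrable_of_sq hXmeas.aestronglyMeasurable ih
  have hdist := hZdist (n + 1) (Nat.succ_le_succ (Nat.zero_le n))
  have hg1 : Integrable (fun ω => (Af lam alp t (Z (n + 1) ω)) ^ 2) μ :=
    integrable_comp_Z hZmeas hdist (measurable_Af.pow_const 2) integrable_Af_sq
  have hg2 : Integrable
      (fun ω => Af lam alp t (Z (n + 1) ω) * Bf lam alp t (Z (n + 1) ω)) μ :=
    integrable_comp_Z hZmeas hdist (measurable_Af.mul measurable_Bf)
      (integrable_Af_mul_Bf hlam.le halp.le ht)
  have hg3 : Integrable (fun ω => (Bf lam alp t (Z (n + 1) ω)) ^ 2) μ :=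
    integrable_comp_Z hZmeas hdist (measurable_Bf.pow_const 2)
      (integrable_Bf_sq hlam.le halp.le ht)
  have hindZ : ProbabilityTheory.IndepFun (oddsChain lam alp t φ Z n) (Z (n + 1)) μ :=
    indepfun_chain hZmeas hZindep ht.le n
  have hF1 : Integrable ((fun ω => (oddsChain lam alp t φ Z n ω) ^ 2) *
      (fun ω => (Af lam alp t (Z (n + 1) ω)) ^ 2)) μ :=
    (hindZ.comp (measurable_id.pow_const 2) (measurable_Af.pow_const 2)).integrable_mul ih hg1
  have hF2 : Integrable ((fun ω => 2 * oddsChain lam alp t φ Z n ω) *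
      (fun ω => Af lam alp t (Z (n + 1) ω) * Bf lam alp t (Z (n + 1) ω))) μ :=
    (hindZ.comp (measurable_id.const_mul 2) (measurable_Af.mul measurable_Bf)).integrable_mul
      (hXint.const_mul 2) hg2
  have hfun : (fun ω' => (oddsChain lam alp t φ Z (n + 1) ω') ^ 2)
      = ((fun ω => (oddsChain lam alp t φ Z n ω) ^ 2) *
          (fun ω => (Af lam alp t (Z (n + 1) ω)) ^ 2)
        + (fun ω => 2 * oddsChain lam alp t φ Z n ω) *
          (fun ω => Af lam alp t (Z (n + 1) ω) * Bf lam alp t (Z (n + 1) ω))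
        + fun ω => (Bf lam alp t (Z (n + 1) ω)) ^ 2) := by
    funext ω
    show (jfun lam alp t (oddsChain lam alp t φ Z n ω) (Z (n + 1) ω)) ^ 2 = _
    rw [jfun_eq ht.le]
    simp only [Pi.add_apply, Pi.mul_apply]
    ring
  rw [hfun]
  -- conditional expectations
  have hcadd : μ[(fun ω => (oddsChain lam alp t φ Z n ω) ^ 2) *
        (fun ω => (Af lam alp t (Z (n + 1) ω)) ^ 2)
      + (fun ω => 2 * oddsChain lam alp t φ Z n ω) *
        (fun ω => Af lam alp t (Z (n + 1) ω) * Bf lam alp t (Z (n + 1) ω))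
      + (fun ω => (Bf lam alp t (Z (n + 1) ω)) ^ 2)|obsFiltration Z n]
      =ᵐ[μ] μ[(fun ω => (oddsChain lam alp t φ Z n ω) ^ 2) *
        (fun ω => (Af lam alp t (Z (n + 1) ω)) ^ 2)|obsFiltration Z n]
      + μ[(fun ω => 2 * oddsChain lam alp t φ Z n ω) *
        (fun ω => Af lam alp t (Z (n + 1) ω) * Bf lam alp t (Z (n + 1) ω))|obsFiltration Z n]
      + μ[fun ω => (Bf lam alp t (Z (n + 1) ω)) ^ 2|obsFiltration Z n] :=
    (condExp_add (hF1.add hF2) hg3 _).trans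
      ((condExp_add hF1 hF2 _).add (Filter.EventuallyEq.refl _ _))
  have hc1 : μ[(fun ω => (oddsChain lam alp t φ Z n ω) ^ 2) *
        (fun ω => (Af lam alp t (Z (n + 1) ω)) ^ 2)|obsFiltration Z n]
      =ᵐ[μ] (fun ω => (oddsChain lam alp t φ Z n ω) ^ 2) *
        μ[fun ω => (Af lam alp t (Z (n + 1) ω)) ^ 2|obsFiltration Z n] :=
    condExp_mul_of_stronglyMeasurable_left ((hXmobs.pow_const 2).stronglyMeasurable) hF1 hg1
  have hc2 : μ[(fun ω => 2 * oddsChain lam alp t φ Z n ω) *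
        (fun ω => Af lam alp t (Z (n + 1) ω) * Bf lam alp t (Z (n + 1) ω))|obsFiltration Z n]
      =ᵐ[μ] (fun ω => 2 * oddsChain lam alp t φ Z n ω) *
        μ[fun ω => Af lam alp t (Z (n + 1) ω) * Bf lam alp t (Z (n + 1) ω)|obsFiltration Z n] :=
    condExp_mul_of_stronglyMeasurable_left ((hXmobs.const_mul 2).stronglyMeasurable) hF2 hg2
  have he1 : μ[fun ω => (Af lam alp t (Z (n + 1) ω)) ^ 2|obsFiltration Z n]
      =ᵐ[μ] fun _ => ∫ ω, (Af lam alp t (Z (n + 1) ω)) ^ 2 ∂μ :=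
    condexp_fun_Z hZmeas hZindep n (measurable_Af.pow_const 2)
  have he2 : μ[fun ω => Af lam alp t (Z (n + 1) ω) * Bf lam alp t (Z (n + 1) ω)|obsFiltration Z n]
      =ᵐ[μ] fun _ => ∫ ω, Af lam alp t (Z (n + 1) ω) * Bf lam alp t (Z (n + 1) ω) ∂μ :=
    condexp_fun_Z hZmeas hZindep n (measurable_Af.mul measurable_Bf)
  have he3 : μ[fun ω => (Bf lam alp t (Z (n + 1) ω)) ^ 2|obsFiltration Z n]
      =ᵐ[μ] fun _ => ∫ ω, (Bf lam alp t (Z (n + 1) ω)) ^ 2 ∂μ :=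
    condexp_fun_Z hZmeas hZindep n (measurable_Bf.pow_const 2)
  -- values of the integrals
  have hv1 : ∫ ω, (Af lam alp t (Z (n + 1) ω)) ^ 2 ∂μ = rexp ((2 * lam + alp ^ 2) * t) := by
    rw [integral_comp_Z hZmeas hdist (measurable_Af.pow_const 2)]
    exact intE1 ht.le
  have hv2 : ∫ ω, Af lam alp t (Z (n + 1) ω) * Bf lam alp t (Z (n + 1) ω) ∂μ
      = rexp (lam * t) * (lam / (lam + alp ^ 2)) * (rexp ((lam + alp ^ 2) * t) - 1) := by
    rw [integral_comp_Z (g := fun z => Af lam alp t z * Bf lam alp t z) hZmeas hdist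
      (measurable_Af.mul measurable_Bf)]
    exact intE2 hlam halp ht
  have hv3 : ∫ ω, (Bf lam alp t (Z (n + 1) ω)) ^ 2 ∂μ
      ≤ rexp (alp ^ 2 * t) * (rexp (lam * t) - 1) ^ 2 := by
    rw [integral_comp_Z hZmeas hdist (measurable_Bf.pow_const 2)]
    exact intE3 hlam halp ht
  filter_upwards [hcadd, hc1, hc2, he1, he2, he3] with ω h0 h1 h2 e1 e2 e3
  rw [h0]
  simp only [Pi.add_apply]
  rw [h1, h2]
  simp only [Pi.mul_apply]
  rw [e1, e2, e3, hv1, hv2]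
  have hX0 : 0 ≤ oddsChain lam alp t φ Z n ω := chain_nonneg hlam.le ht.le hφ n ω
  have h12 : (oddsChain lam alp t φ Z n ω) ^ 2 * rexp ((2 * lam + alp ^ 2) * t)
      + 2 * oddsChain lam alp t φ Z n ω *
        (rexp (lam * t) * (lam / (lam + alp ^ 2)) * (rexp ((lam + alp ^ 2) * t) - 1))
      = (oddsChain lam alp t φ Z n ω) ^ 2 * rexp ((2 * lam + alp ^ 2) * t)
      + 2 * oddsChain lam alp t φ Z n ω * rexp (lam * t) *
        (lam / (lam + alp ^ 2)) * (rexp ((lam + alp ^ 2) * t) - 1) := by ring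
  linarith [hv3]
end

section
/- Let w : [0, ∞) → ℝ be Lipschitz continuous with −1/c ≤ w(x) ≤ 0 for all x ≥ 0. Then the map (t, φ) ↦ Jw(t, φ) is jointly continuous on (0, ∞) × [0, ∞), and the map φ ↦ J₀w(φ) is continuous on [0, ∞). -/
open MeasureTheory Real

/-- Deterministic evolution of the odds process between observations. -/
noncomputable def varphi (lam t x : ℝ) : ℝ := Real.exp (lam * t) * (x + 1) - 1

/-- The averaging operator `K`: Gaussian expectation of `w` applied to the
one-step odds update. -/
noncomputable def Kop (lam alp : ℝ) (w : ℝ → ℝ) (t φ : ℝ) : ℝ :=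
  ∫ z : ℝ, w (jfun lam alp t φ z) * gaussDensity z

/-- The jump operator `J`: running cost until the next observation at time `t`,
plus the discounted continuation value after that observation. -/
noncomputable def Jop (lam alp c : ℝ) (w : ℝ → ℝ) (t φ : ℝ) : ℝ :=
  (∫ u in (0:ℝ)..t, Real.exp (-(lam * u)) * (varphi lam u φ - lam / c)) +
    (if 0 < t then Real.exp (-(lam * t)) * Kop lam alp w t φ else 0)

/-- The optimized jump operator `J₀ w(φ) = inf_{t ≥ 0} J w(t, φ)`. -/
noncomputable def J0op (lam alp c : ℝ) (w : ℝ → ℝ) (φ : ℝ) : ℝ :=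
  ⨅ t : Set.Ici (0:ℝ), Jop lam alp c w t φ

/-! ### Gaussian integral lemmas -/

lemma gauss_key (a z : ℝ) :
    Real.exp (a * z) * gaussDensity z
      = (Real.exp (a ^ 2 / 2) / Real.sqrt (2 * Real.pi)) * Real.exp (-(1/2) * (z - a) ^ 2) := by
  unfold gaussDensity
  have h1 : Real.exp (a * z) * Real.exp (-z ^ 2 / 2)
      = Real.exp (a ^ 2 / 2) * Real.exp (-(1/2) * (z - a) ^ 2) := by
    rw [← Real.exp_add, ← Real.exp_add]; congr 1; ring
  rw [← mul_div_assoc, h1]; ring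

lemma integrable_exp_mul_gauss (a : ℝ) :
    Integrable (fun z => Real.exp (a * z) * gaussDensity z) := by
  have h : Integrable (fun z : ℝ => Real.exp (-(1/2) * z ^ 2)) :=
    integrable_exp_neg_mul_sq (by norm_num)
  have h2 := (h.comp_sub_right a).const_mul (Real.exp (a ^ 2 / 2) / Real.sqrt (2 * Real.pi))
  exact h2.congr (by filter_upwards with z; rw [gauss_key])

lemma integral_exp_mul_gauss (a : ℝ) :
    ∫ z, Real.exp (a * z) * gaussDensity z = Real.exp (a ^ 2 / 2) := by
  simp_rw [gauss_key a]
  rw [integral_const_mul, integral_sub_right_eq_self (fun z => Real.exp (-(1/2) * z ^ 2)) a]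
  have : ∫ z : ℝ, Real.exp (-(1/2) * z ^ 2) = Real.sqrt (Real.pi / (1/2)) :=
    integral_gaussian (1/2)
  rw [this]
  have hpi : Real.pi / (1/2) = 2 * Real.pi := by ring
  rw [hpi, div_mul_cancel₀]
  positivity

lemma integral_gaussDensity : ∫ z, gaussDensity z = 1 := by
  have := integral_exp_mul_gauss 0
  simpa using this

lemma integrable_gaussDensity : Integrable gaussDensity := by
  have := integrable_exp_mul_gauss 0
  simpa using this

lemma gaussDensity_nonneg (z : ℝ) : 0 ≤ gaussDensity z := by
  unfold gaussDensity; positivity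

lemma continuous_gaussDensity : Continuous gaussDensity := by
  unfold gaussDensity; fun_prop

/-! ### jfun lemmas -/

lemma continuousOn_jfun (lam alp : ℝ) :
    ContinuousOn (fun p : ℝ × ℝ × ℝ => jfun lam alp p.1 p.2.1 p.2.2)
      {p : ℝ × ℝ × ℝ | 0 < p.1} := by
  rw [continuousOn_iff_continuous_restrict]
  set S : Set (ℝ × ℝ × ℝ) := {p | 0 < p.1} with hS
  have ht : Continuous fun x : S => x.val.1 := continuous_fst.comp continuous_subtype_val
  have hφ : Continuous fun x : S => x.val.2.1 :=
    continuous_fst.comp (continuous_snd.comp continuous_subtype_val)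
  have hz : Continuous fun x : S => x.val.2.2 :=
    continuous_snd.comp (continuous_snd.comp continuous_subtype_val)
  have hsqrt : Continuous fun x : S => Real.sqrt x.val.1 := Real.continuous_sqrt.comp ht
  have hsqrt_ne : ∀ x : S, Real.sqrt x.val.1 ≠ 0 := fun x => (Real.sqrt_pos.mpr x.2).ne'
  have ht_ne : ∀ x : S, (2 : ℝ) * x.val.1 ≠ 0 := fun x => by
    have : (0:ℝ) < x.val.1 := x.2
    positivity
  have hexp : Continuous fun x : S =>
      Real.exp (alp * x.val.2.2 * Real.sqrt x.val.1 + (lam - alp ^ 2 / 2) * x.val.1) *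
        x.val.2.1 := by
    exact (Real.continuous_exp.comp (((continuous_const.mul hz).mul hsqrt).add
      (continuous_const.mul ht))).mul hφ
  have hF : Continuous (Function.uncurry fun (x : S) (u : ℝ) =>
      lam * Real.exp ((lam + alp * x.val.2.2 / Real.sqrt x.val.1) * u
        - alp ^ 2 * u ^ 2 / (2 * x.val.1))) := by
    apply continuous_const.mul
    apply Real.continuous_exp.comp
    apply Continuous.sub
    · exact (continuous_const.add (((continuous_const.mul (hz.comp continuous_fst)).div
        (hsqrt.comp continuous_fst)) fun p => hsqrt_ne p.1)).mul continuous_snd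
    · exact (continuous_const.mul (continuous_snd.pow 2)).div
        ((continuous_const.mul (ht.comp continuous_fst))) fun p => ht_ne p.1
  have hint : Continuous fun x : S => ∫ u in (0:ℝ)..(x.val.1),
      lam * Real.exp ((lam + alp * x.val.2.2 / Real.sqrt x.val.1) * u
        - alp ^ 2 * u ^ 2 / (2 * x.val.1)) :=
    intervalIntegral.continuous_parametric_intervalIntegral_of_continuous hF ht
  exact hexp.add hint

lemma jfun_nonneg {lam t φ : ℝ} (alp z : ℝ) (hlam : 0 ≤ lam) (ht : 0 ≤ t) (hφ : 0 ≤ φ) :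
    0 ≤ jfun lam alp t φ z :=
  add_nonneg (mul_nonneg (Real.exp_pos _).le hφ)
    (intervalIntegral.integral_nonneg ht fun u _ => mul_nonneg hlam (Real.exp_pos _).le)

lemma jfun_sub (lam alp t φ φ' z : ℝ) :
    jfun lam alp t φ z - jfun lam alp t φ' z
      = Real.exp (alp * z * Real.sqrt t + (lam - alp ^ 2 / 2) * t) * (φ - φ') := by
  unfold jfun; ring

lemma continuous_jfun_z {lam alp t φ : ℝ} (ht : 0 < t) :
    Continuous fun z => jfun lam alp t φ z := by
  have := (continuousOn_jfun lam alp).comp_continuous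
    (f := fun z : ℝ => ((t, φ, z) : ℝ × ℝ × ℝ))
    (by fun_prop) (fun z => by exact ht)
  exact this

/-! ### running-cost integral -/

lemma integral_exp_neg_mul_lam (lam t : ℝ) (hlam : 0 < lam) :
    ∫ u in (0:ℝ)..t, Real.exp (-(lam * u)) = (1 - Real.exp (-(lam * t))) / lam := by
  have h0 : ∀ u : ℝ, -(lam * u) = u * -lam := fun u => by ring
  simp_rw [h0]
  rw [intervalIntegral.integral_comp_mul_right Real.exp (by linarith : -lam ≠ 0)]
  rw [zero_mul, integral_exp, smul_eq_mul, Real.exp_zero]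
  rw [show t * -lam = -(lam * t) by ring]
  rw [inv_neg, neg_mul, neg_eq_iff_eq_neg, ← neg_div, neg_sub, inv_mul_eq_div]

lemma integral_run (lam c φ t : ℝ) (hlam : 0 < lam) :
    ∫ u in (0:ℝ)..t, Real.exp (-(lam * u)) * (varphi lam u φ - lam / c)
      = (φ + 1) * t - (1 + lam / c) * ((1 - Real.exp (-(lam * t))) / lam) := by
  have h1 : ∀ u : ℝ, Real.exp (-(lam * u)) * (varphi lam u φ - lam / c)
      = (φ + 1) - (1 + lam / c) * Real.exp (-(lam * u)) := by
    intro u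
    unfold varphi
    rw [Real.exp_neg]
    have h := (Real.exp_pos (lam * u)).ne'
    field_simp
    ring
  rw [intervalIntegral.integral_congr (g := fun u => (φ + 1) - (1 + lam / c) * Real.exp (-(lam * u)))
    (fun u _ => h1 u)]
  rw [intervalIntegral.integral_sub (intervalIntegrable_const)
    (Continuous.intervalIntegrable (by fun_prop) _ _)]
  rw [intervalIntegral.integral_const_mul, integral_exp_neg_mul_lam lam t hlam,
    intervalIntegral.integral_const, smul_eq_mul, sub_zero]
  ring

/-! ### Kop lemmas -/

section Kop

variable {lam alp c : ℝ} {w : ℝ → ℝ} {L : NNReal}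
variable (hlam : 0 < lam) (hc : 0 < c)
variable (hLip : LipschitzOnWith L w (Set.Ici (0:ℝ)))
variable (hwl : ∀ x : ℝ, 0 ≤ x → -1 / c ≤ w x) (hwu : ∀ x : ℝ, 0 ≤ x → w x ≤ 0)

include hc hwl hwu in
lemma abs_w_le {x : ℝ} (hx : 0 ≤ x) : |w x| ≤ 1 / c := by
  rw [abs_le]
  constructor
  · have := hwl x hx; rw [neg_div] at this; linarith
  · have := hwu x hx; have h1 : (0:ℝ) ≤ 1 / c := by positivity
    linarith

include hlam hc hLip hwl hwu in
lemma integrable_w_jfun {t φ : ℝ} (ht : 0 < t) (hφ : 0 ≤ φ) :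
    Integrable (fun z => w (jfun lam alp t φ z) * gaussDensity z) := by
  have hjz : Continuous fun z => jfun lam alp t φ z := continuous_jfun_z ht
  have hwj : Continuous fun z => w (jfun lam alp t φ z) :=
    hLip.continuousOn.comp_continuous hjz
      (fun z => jfun_nonneg alp z hlam.le ht.le hφ)
  refine Integrable.mono' (integrable_gaussDensity.const_mul (1 / c))
    (hwj.mul continuous_gaussDensity).aestronglyMeasurable ?_
  filter_upwards with z
  rw [norm_mul, Real.norm_eq_abs, Real.norm_eq_abs, abs_of_nonneg (gaussDensity_nonneg z)]
  exact mul_le_mul_of_nonneg_right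
    (abs_w_le hc hwl hwu (jfun_nonneg alp z hlam.le ht.le hφ)) (gaussDensity_nonneg z)

include hlam hc hLip hwl hwu in
lemma Kop_ge {t φ : ℝ} (ht : 0 < t) (hφ : 0 ≤ φ) : -(1/c) ≤ Kop lam alp w t φ := by
  have h1 : ∫ z, (-(1/c)) * gaussDensity z = -(1/c) := by
    rw [integral_const_mul, integral_gaussDensity, mul_one]
  rw [← h1]
  apply integral_mono (integrable_gaussDensity.const_mul _)
    (integrable_w_jfun hlam hc hLip hwl hwu ht hφ)
  intro z
  apply mul_le_mul_of_nonneg_right _ (gaussDensity_nonneg z)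
  have := hwl _ (jfun_nonneg alp z hlam.le ht.le hφ)
  rw [neg_div] at this; linarith

include hlam hc hLip hwl hwu in
lemma Kop_sub_le {t φ φ' : ℝ} (ht : 0 < t) (hφ : 0 ≤ φ) (hφ' : 0 ≤ φ') :
    |Kop lam alp w t φ - Kop lam alp w t φ'| ≤ L * Real.exp (lam * t) * |φ - φ'| := by
  have hint := integrable_w_jfun (alp := alp) hlam hc hLip hwl hwu ht hφ
  have hint' := integrable_w_jfun (alp := alp) hlam hc hLip hwl hwu ht hφ'
  have hsub : Kop lam alp w t φ - Kop lam alp w t φ'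
      = ∫ z, (w (jfun lam alp t φ z) - w (jfun lam alp t φ' z)) * gaussDensity z := by
    rw [Kop, Kop, ← integral_sub hint hint']
    congr 1; funext z; ring
  set g : ℝ → ℝ := fun z => (L * |φ - φ'| * Real.exp ((lam - alp ^ 2 / 2) * t)) *
    (Real.exp ((alp * Real.sqrt t) * z) * gaussDensity z) with hg
  have hgint : Integrable g := (integrable_exp_mul_gauss (alp * Real.sqrt t)).const_mul _
  have hbound : ∀ z, ‖(w (jfun lam alp t φ z) - w (jfun lam alp t φ' z)) * gaussDensity z‖
      ≤ g z := by
    intro z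
    rw [norm_mul, Real.norm_eq_abs, Real.norm_eq_abs, abs_of_nonneg (gaussDensity_nonneg z)]
    have hd : |w (jfun lam alp t φ z) - w (jfun lam alp t φ' z)|
        ≤ L * |jfun lam alp t φ z - jfun lam alp t φ' z| := by
      have := hLip.dist_le_mul _ (jfun_nonneg alp z hlam.le ht.le hφ)
        _ (jfun_nonneg alp z hlam.le ht.le hφ')
      rwa [Real.dist_eq, Real.dist_eq] at this
    have hj : |jfun lam alp t φ z - jfun lam alp t φ' z|
        = Real.exp (alp * z * Real.sqrt t + (lam - alp ^ 2 / 2) * t) * |φ - φ'| := by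
      rw [jfun_sub, abs_mul, abs_of_nonneg (Real.exp_pos _).le]
    have hE : Real.exp (alp * z * Real.sqrt t + (lam - alp ^ 2 / 2) * t)
        = Real.exp ((lam - alp ^ 2 / 2) * t) * Real.exp ((alp * Real.sqrt t) * z) := by
      rw [← Real.exp_add]; congr 1; ring
    calc |w (jfun lam alp t φ z) - w (jfun lam alp t φ' z)| * gaussDensity z
        ≤ (L * (Real.exp (alp * z * Real.sqrt t + (lam - alp ^ 2 / 2) * t) * |φ - φ'|)) *
          gaussDensity z := by
          apply mul_le_mul_of_nonneg_right _ (gaussDensity_nonneg z)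
          rw [← hj]; exact hd
      _ = g z := by rw [hg, hE]; ring
  have habs : |Kop lam alp w t φ - Kop lam alp w t φ'| ≤ ∫ z, g z := by
    rw [hsub, ← Real.norm_eq_abs]
    exact norm_integral_le_of_norm_le hgint (Filter.Eventually.of_forall hbound)
  have hgval : ∫ z, g z = L * |φ - φ'| * Real.exp (lam * t) := by
    rw [hg, integral_const_mul, integral_exp_mul_gauss, mul_pow, sq_sqrt ht.le]
    rw [mul_assoc, ← Real.exp_add]
    congr 2
    ring
  rw [hgval] at habs
  calc |Kop lam alp w t φ - Kop lam alp w t φ'| ≤ L * |φ - φ'| * Real.exp (lam * t) := habs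
    _ = L * Real.exp (lam * t) * |φ - φ'| := by ring

end Kop

/-! ### Jop lemmas -/

section Jop

variable {lam alp c : ℝ} {w : ℝ → ℝ} {L : NNReal}
variable (hlam : 0 < lam) (hc : 0 < c)
variable (hLip : LipschitzOnWith L w (Set.Ici (0:ℝ)))
variable (hwl : ∀ x : ℝ, 0 ≤ x → -1 / c ≤ w x) (hwu : ∀ x : ℝ, 0 ≤ x → w x ≤ 0)

lemma Jop_zero (φ : ℝ) : Jop lam alp c w 0 φ = 0 := by
  simp [Jop]

include hlam hc hLip hwl hwu in
lemma Jop_lower {t φ : ℝ} (ht : 0 ≤ t) (hφ : 0 ≤ φ) :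
    -((1 + lam / c) / lam + 1 / c) ≤ Jop lam alp c w t φ := by
  rw [Jop, integral_run lam c φ t hlam]
  have h1 : 0 ≤ (φ + 1) * t := mul_nonneg (by linarith) ht
  have h2 : (1 - Real.exp (-(lam * t))) / lam ≤ 1 / lam := by
    gcongr
    have := (Real.exp_pos (-(lam * t))).le
    linarith
  have h3 : (0:ℝ) < 1 + lam / c := by positivity
  have h4 : (1 + lam / c) * ((1 - Real.exp (-(lam * t))) / lam) ≤ (1 + lam / c) / lam := by
    calc (1 + lam / c) * ((1 - Real.exp (-(lam * t))) / lam) ≤ (1 + lam / c) * (1 / lam) :=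
          mul_le_mul_of_nonneg_left h2 h3.le
      _ = (1 + lam / c) / lam := by ring
  have h5 : -(1 / c) ≤ (if 0 < t then Real.exp (-(lam * t)) * Kop lam alp w t φ else 0) := by
    split_ifs with h
    · have hK := Kop_ge (alp := alp) hlam hc hLip hwl hwu h hφ
      have he1 : Real.exp (-(lam * t)) ≤ 1 := by
        rw [Real.exp_le_one_iff]
        nlinarith
      have he0 : (0:ℝ) < Real.exp (-(lam * t)) := Real.exp_pos _
      have hstep : Real.exp (-(lam * t)) * (-(1/c)) ≤ Real.exp (-(lam * t)) * Kop lam alp w t φ :=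
        mul_le_mul_of_nonneg_left hK he0.le
      have h6 : Real.exp (-(lam * t)) * (1/c) ≤ 1 * (1/c) :=
        mul_le_mul_of_nonneg_right he1 (by positivity)
      nlinarith
    · have : (0:ℝ) ≤ 1 / c := by positivity
      linarith
  linarith

include hlam hc hLip hwl hwu in
lemma Jop_growth {t φ : ℝ} (ht : (1 + lam / c) / lam + 1 / c ≤ t) (hφ : 0 ≤ φ) :
    0 ≤ Jop lam alp c w t φ := by
  have ht0 : 0 ≤ t := by
    have : (0:ℝ) < (1 + lam / c) / lam + 1 / c := by positivity
    linarith
  rw [Jop, integral_run lam c φ t hlam]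
  have h1 : t ≤ (φ + 1) * t := by nlinarith
  have h2 : (1 - Real.exp (-(lam * t))) / lam ≤ 1 / lam := by
    gcongr
    have := (Real.exp_pos (-(lam * t))).le
    linarith
  have h3 : (0:ℝ) < 1 + lam / c := by positivity
  have h4 : (1 + lam / c) * ((1 - Real.exp (-(lam * t))) / lam) ≤ (1 + lam / c) / lam := by
    calc (1 + lam / c) * ((1 - Real.exp (-(lam * t))) / lam) ≤ (1 + lam / c) * (1 / lam) :=
          mul_le_mul_of_nonneg_left h2 h3.le
      _ = (1 + lam / c) / lam := by ring
  have h5 : -(1 / c) ≤ (if 0 < t then Real.exp (-(lam * t)) * Kop lam alp w t φ else 0) := by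
    split_ifs with h
    · have hK := Kop_ge (alp := alp) hlam hc hLip hwl hwu h hφ
      have he1 : Real.exp (-(lam * t)) ≤ 1 := by
        rw [Real.exp_le_one_iff]
        nlinarith
      have he0 : (0:ℝ) < Real.exp (-(lam * t)) := Real.exp_pos _
      have hstep : Real.exp (-(lam * t)) * (-(1/c)) ≤ Real.exp (-(lam * t)) * Kop lam alp w t φ :=
        mul_le_mul_of_nonneg_left hK he0.le
      have h6 : Real.exp (-(lam * t)) * (1/c) ≤ 1 * (1/c) :=
        mul_le_mul_of_nonneg_right he1 (by positivity)
      nlinarith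
    · have : (0:ℝ) ≤ 1 / c := by positivity
      linarith
  linarith

include hlam hc hLip hwl hwu in
lemma Jop_lip {t φ φ' : ℝ} (ht : 0 ≤ t) (hφ : 0 ≤ φ) (hφ' : 0 ≤ φ') :
    |Jop lam alp c w t φ - Jop lam alp c w t φ'| ≤ (t + L) * |φ - φ'| := by
  have hsplit : Jop lam alp c w t φ - Jop lam alp c w t φ'
      = t * (φ - φ') +
        ((if 0 < t then Real.exp (-(lam * t)) * Kop lam alp w t φ else 0) -
         (if 0 < t then Real.exp (-(lam * t)) * Kop lam alp w t φ' else 0)) := by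
    rw [Jop, Jop, integral_run lam c φ t hlam, integral_run lam c φ' t hlam]
    ring
  have hK : |(if 0 < t then Real.exp (-(lam * t)) * Kop lam alp w t φ else 0) -
      (if 0 < t then Real.exp (-(lam * t)) * Kop lam alp w t φ' else 0)|
      ≤ L * |φ - φ'| := by
    split_ifs with h
    · rw [← mul_sub, abs_mul, abs_of_nonneg (Real.exp_pos _).le]
      have hKs := Kop_sub_le (alp := alp) hlam hc hLip hwl hwu h hφ hφ'
      calc Real.exp (-(lam * t)) * |Kop lam alp w t φ - Kop lam alp w t φ'|
          ≤ Real.exp (-(lam * t)) * (L * Real.exp (lam * t) * |φ - φ'|) :=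
            mul_le_mul_of_nonneg_left hKs (Real.exp_pos _).le
        _ = (Real.exp (-(lam * t)) * Real.exp (lam * t)) * (L * |φ - φ'|) := by ring
        _ = L * |φ - φ'| := by rw [← Real.exp_add, neg_add_cancel, Real.exp_zero, one_mul]
    · simp only [sub_zero, abs_zero]
      positivity
  calc |Jop lam alp c w t φ - Jop lam alp c w t φ'|
      ≤ |t * (φ - φ')| + |(if 0 < t then Real.exp (-(lam * t)) * Kop lam alp w t φ else 0) -
          (if 0 < t then Real.exp (-(lam * t)) * Kop lam alp w t φ' else 0)| := by
        rw [hsplit]; exact abs_add_le _ _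
    _ ≤ t * |φ - φ'| + L * |φ - φ'| := by
        rw [abs_mul, abs_of_nonneg ht]
        exact add_le_add le_rfl hK
    _ = (t + L) * |φ - φ'| := by ring

end Jop

/-! ### Main theorem -/

/-- For `w` Lipschitz on `[0, ∞)` with values in `[−1/c, 0]`, the map
`(t, φ) ↦ J w(t, φ)` is jointly continuous on `(0, ∞) × [0, ∞)`, and
`φ ↦ J₀ w(φ)` is continuous on `[0, ∞)`. -/
theorem Jop_J0op_continuous (lam alp c : ℝ) (hlam : 0 < lam) (halp : 0 < alp) (hc : 0 < c)
    (w : ℝ → ℝ) (L : NNReal) (hLip : LipschitzOnWith L w (Set.Ici (0:ℝ)))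
    (hwl : ∀ x : ℝ, 0 ≤ x → -1 / c ≤ w x) (hwu : ∀ x : ℝ, 0 ≤ x → w x ≤ 0) :
    ContinuousOn (fun p : ℝ × ℝ => Jop lam alp c w p.1 p.2)
        (Set.Ioi (0:ℝ) ×ˢ Set.Ici (0:ℝ)) ∧
      ContinuousOn (J0op lam alp c w) (Set.Ici (0:ℝ)) := by
  have habsw : ∀ x : ℝ, 0 ≤ x → |w x| ≤ 1 / c := fun x hx => abs_w_le hc hwl hwu hx
  constructor
  · -- joint continuity of Jop
    have hKopcont : ContinuousOn (fun p : ℝ × ℝ => Kop lam alp w p.1 p.2)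
        (Set.Ioi (0:ℝ) ×ˢ Set.Ici (0:ℝ)) := by
      intro p₀ hp₀
      rw [Set.mem_prod] at hp₀
      unfold Kop
      apply continuousWithinAt_of_dominated (bound := fun z => (1/c) * gaussDensity z)
      · apply eventually_nhdsWithin_of_forall
        intro p hp
        rw [Set.mem_prod] at hp
        exact ((hLip.continuousOn.comp_continuous (continuous_jfun_z hp.1)
          (fun z => jfun_nonneg alp z hlam.le (le_of_lt hp.1) hp.2)).mul
          continuous_gaussDensity).aestronglyMeasurable
      · apply eventually_nhdsWithin_of_forall
        intro p hp
        rw [Set.mem_prod] at hp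
        filter_upwards with z
        rw [norm_mul, Real.norm_eq_abs, Real.norm_eq_abs,
          abs_of_nonneg (gaussDensity_nonneg z)]
        exact mul_le_mul_of_nonneg_right
          (habsw _ (jfun_nonneg alp z hlam.le (le_of_lt hp.1) hp.2)) (gaussDensity_nonneg z)
      · exact integrable_gaussDensity.const_mul _
      · filter_upwards with z
        apply ContinuousWithinAt.mul _ continuousWithinAt_const
        have hjc : ContinuousOn (fun p : ℝ × ℝ => jfun lam alp p.1 p.2 z)
            {p : ℝ × ℝ | 0 < p.1} := by
          have h := (continuousOn_jfun lam alp).comp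
            (f := fun p : ℝ × ℝ => ((p.1, p.2, z) : ℝ × ℝ × ℝ))
            (Continuous.continuousOn (by fun_prop)) (fun p hp => hp)
          exact h
        have hwj : ContinuousOn (fun p : ℝ × ℝ => w (jfun lam alp p.1 p.2 z))
            (Set.Ioi (0:ℝ) ×ˢ Set.Ici (0:ℝ)) := by
          apply hLip.continuousOn.comp
            (hjc.mono (fun p hp => hp.1))
          intro p hp
          rw [Set.mem_prod] at hp
          exact jfun_nonneg alp z hlam.le (le_of_lt hp.1) hp.2
        exact hwj p₀ (Set.mem_prod.mpr hp₀)
    have hJeq : Set.EqOn (fun p : ℝ × ℝ => Jop lam alp c w p.1 p.2)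
        (fun p : ℝ × ℝ =>
          ((p.2 + 1) * p.1 - (1 + lam / c) * ((1 - Real.exp (-(lam * p.1))) / lam)) +
            Real.exp (-(lam * p.1)) * Kop lam alp w p.1 p.2)
        (Set.Ioi (0:ℝ) ×ˢ Set.Ici (0:ℝ)) := by
      intro p hp
      rw [Set.mem_prod] at hp
      simp only [Jop, integral_run lam c p.2 p.1 hlam, if_pos (Set.mem_Ioi.mp hp.1)]
    apply ContinuousOn.congr _ hJeq
    apply ContinuousOn.add
    · exact Continuous.continuousOn (by fun_prop)
    · exact (Continuous.continuousOn (by fun_prop)).mul hKopcont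
  · -- continuity of J0op
    haveI : Nonempty ↥(Set.Ici (0:ℝ)) := ⟨⟨0, Set.self_mem_Ici⟩⟩
    set T₀ : ℝ := (1 + lam / c) / lam + 1 / c with hT₀
    have hT₀pos : 0 < T₀ := by positivity
    set C : ℝ := T₀ + L with hCdef
    have hC : 0 ≤ C := by positivity
    have hbdd : ∀ φ : ℝ, 0 ≤ φ →
        BddBelow (Set.range fun t : Set.Ici (0:ℝ) => Jop lam alp c w t φ) := by
      intro φ hφ
      refine ⟨-((1 + lam / c) / lam + 1 / c), ?_⟩
      rintro x ⟨t, rfl⟩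
      exact Jop_lower hlam hc hLip hwl hwu t.2 hφ
    have key : ∀ φ ∈ Set.Ici (0:ℝ), ∀ φ' ∈ Set.Ici (0:ℝ),
        J0op lam alp c w φ ≤ J0op lam alp c w φ' + C * |φ - φ'| := by
      intro φ hφ φ' hφ'
      have hstep : J0op lam alp c w φ - C * |φ - φ'| ≤ J0op lam alp c w φ' := by
        conv_rhs => rw [J0op]
        apply le_ciInf
        intro t
        by_cases htT : t.val ≤ T₀
        · have h1 : J0op lam alp c w φ ≤ Jop lam alp c w t φ := ciInf_le (hbdd φ hφ) t
          have h2 := Jop_lip (alp := alp) hlam hc hLip hwl hwu t.2 hφ hφ'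
          have h3 : (t.val + L) * |φ - φ'| ≤ C * |φ - φ'| := by
            apply mul_le_mul_of_nonneg_right _ (abs_nonneg _)
            rw [hCdef]
            linarith
          have h4 := (abs_le.mp h2).2
          linarith
        · push_neg at htT
          have h1 : J0op lam alp c w φ ≤ Jop lam alp c w 0 φ :=
            ciInf_le (hbdd φ hφ) ⟨0, Set.self_mem_Ici⟩
          rw [Jop_zero φ] at h1
          have h2 : 0 ≤ Jop lam alp c w t.val φ' :=
            Jop_growth hlam hc hLip hwl hwu (by rw [← hT₀]; exact htT.le) hφ'
          have h3 : 0 ≤ C * |φ - φ'| := mul_nonneg hC (abs_nonneg _)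
          linarith
      linarith
    apply LipschitzOnWith.continuousOn (K := C.toNNReal)
    apply LipschitzOnWith.of_dist_le_mul
    intro x hx y hy
    rw [Real.dist_eq, Real.dist_eq, Real.coe_toNNReal _ hC]
    rw [abs_sub_le_iff]
    constructor
    · have := key x hx y hy; linarith
    · have := key y hy x hx; rw [abs_sub_comm] at this; linarith
end
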